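/- arXiv:1602.04145 — 13 statements merged into one kernel-verified Lean document; each statement's English description precedes it below -/
import Mathlib

section
/- Let H be a 4×4 complex Hermitian matrix, regarded as a two-qubit Hamiltonian (a matrix indexed by Fin 2 × Fin 2). If H ⊗ₖ I₂ commutes with I₂ ⊗ₖ H, then there exist a 2×2 unitary matrix U and a function d : Fin 2 × Fin 2 → ℝ such that H = (U ⊗ₖ U) * Matrix.diagonal (fun p => (d p : ℂ)) * (U ⊗ₖ U)ᴴ. -/
open Matrix Kronecker

abbrev M2 := Matrix (Fin 2) (Fin 2) ℂ

lemma kron_conjT (A B : M2) : (A ⊗ₖ B)ᴴ = Aᴴ ⊗ₖ Bᴴ := by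
  ext ⟨i,j⟩ ⟨k,l⟩
  simp [conjTranspose_apply, kroneckerMap_apply, mul_comm]

lemma diag_of_comm (v : Fin 2 → ℂ) (hv : v 0 ≠ v 1) (Z : M2)
    (h : Z * diagonal v = diagonal v * Z) : Z 0 1 = 0 ∧ Z 1 0 = 0 := by
  have h01 := congrFun (congrFun h 0) 1
  have h10 := congrFun (congrFun h 1) 0
  simp [mul_apply, diagonal_apply, Fin.sum_univ_two] at h01 h10
  have hv' : v 1 - v 0 ≠ 0 := sub_ne_zero.mpr (Ne.symm hv)
  constructor
  · have : Z 0 1 * (v 1 - v 0) = 0 := by ring_nf; linear_combination h01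
    rcases mul_eq_zero.mp this with h | h
    · exact h
    · exact absurd h hv'
  · have : Z 1 0 * (v 1 - v 0) = 0 := by ring_nf; linear_combination -h10
    rcases mul_eq_zero.mp this with h | h
    · exact h
    · exact absurd h hv'

lemma spectral2 (P : M2) (hP : P.IsHermitian) :
    ∃ W ∈ Matrix.unitaryGroup (Fin 2) ℂ, ∃ e : Fin 2 → ℝ,
      P = W * diagonal (fun i => (e i : ℂ)) * Wᴴ ∧
      (¬(∃ c : ℂ, P = c • 1) → (e 0 : ℂ) ≠ (e 1 : ℂ)) := by
  refine ⟨hP.eigenvectorUnitary, (hP.eigenvectorUnitary).2, hP.eigenvalues, ?_, ?_⟩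
  · have := hP.spectral_theorem
    rw [Unitary.conjStarAlgAut_apply] at this
    rw [← Matrix.star_eq_conjTranspose]
    exact this
  · intro hns
    intro he
    apply hns
    refine ⟨(hP.eigenvalues 0 : ℂ), ?_⟩
    have hd : (diagonal (RCLike.ofReal ∘ hP.eigenvalues) : M2) = (hP.eigenvalues 0 : ℂ) • 1 := by
      ext i j
      fin_cases i <;> fin_cases j <;>
        simp [diagonal_apply, Function.comp] <;>
      · exact_mod_cast he.symm
    conv_lhs => rw [hP.spectral_theorem, Unitary.conjStarAlgAut_apply]
    rw [hd]
    rw [mul_smul_comm, smul_mul_assoc, mul_one,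
      Matrix.mem_unitaryGroup_iff.mp (hP.eigenvectorUnitary).2]

lemma unit_eqs {W : M2} (hW : W ∈ Matrix.unitaryGroup (Fin 2) ℂ) :
    Wᴴ * W = 1 ∧ W * Wᴴ = 1 := by
  constructor
  · rw [← Matrix.star_eq_conjTranspose]; exact Matrix.mem_unitaryGroup_iff'.mp hW
  · rw [← Matrix.star_eq_conjTranspose]; exact Matrix.mem_unitaryGroup_iff.mp hW

lemma conjMulKron (W A B : M2) (h1 : Wᴴ * W = 1) :
    (W * A * Wᴴ) * (W * B * Wᴴ) = W * (A * B) * Wᴴ := by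
  simp only [Matrix.mul_assoc]
  rw [← Matrix.mul_assoc Wᴴ W, h1, Matrix.one_mul]

lemma offdiag_mul_comm (A B : M2) (ha1 : A 0 1 = 0) (ha2 : A 1 0 = 0)
    (hb1 : B 0 1 = 0) (hb2 : B 1 0 = 0) : A * B = B * A := by
  ext i j
  fin_cases i <;> fin_cases j <;>
    simp [Matrix.mul_apply, Fin.sum_univ_two, ha1, ha2, hb1, hb2] <;> ring

lemma expand_conj (W Z : M2) (h2 : W * Wᴴ = 1) : W * (Wᴴ * Z * W) * Wᴴ = Z := by
  calc W * (Wᴴ * Z * W) * Wᴴ = (W * Wᴴ) * Z * (W * Wᴴ) := by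
        simp only [Matrix.mul_assoc]
    _ = Z := by rw [h2, Matrix.one_mul, Matrix.mul_one]

lemma exists_diagonalizer (P : M2) (hP : P.IsHermitian) (hns : ¬∃ c : ℂ, P = c • 1) :
    ∃ W ∈ Matrix.unitaryGroup (Fin 2) ℂ, ∀ Z : M2, Z * P = P * Z →
      (Wᴴ * Z * W) 0 1 = 0 ∧ (Wᴴ * Z * W) 1 0 = 0 := by
  obtain ⟨W, hW, e, hPeq, hdist⟩ := spectral2 P hP
  obtain ⟨h1, h2⟩ := unit_eqs hW
  refine ⟨W, hW, fun Z hZ => ?_⟩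
  refine diag_of_comm (fun i => (e i : ℂ)) (hdist hns) _ ?_
  have key : (Wᴴ * Z * W) * diagonal (fun i => (e i : ℂ)) * (Wᴴ * W)
      = (Wᴴ * W) * (diagonal (fun i => (e i : ℂ)) * (Wᴴ * Z * W)) := by
    calc (Wᴴ * Z * W) * diagonal (fun i => (e i : ℂ)) * (Wᴴ * W)
        = Wᴴ * (Z * (W * diagonal (fun i => (e i : ℂ)) * Wᴴ)) * W := by
          simp only [Matrix.mul_assoc]
      _ = Wᴴ * ((W * diagonal (fun i => (e i : ℂ)) * Wᴴ) * Z) * W := by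
          rw [← hPeq, hZ]
      _ = (Wᴴ * W) * (diagonal (fun i => (e i : ℂ)) * (Wᴴ * Z * W)) := by
          simp only [Matrix.mul_assoc]
  rw [h1, Matrix.mul_one, Matrix.one_mul] at key
  exact key

lemma comm_of_comm_herm (Q : M2) (hQ : Q.IsHermitian) (hns : ¬∃ c : ℂ, Q = c • 1)
    (Z₁ Z₂ : M2) (hz1 : Z₁ * Q = Q * Z₁) (hz2 : Z₂ * Q = Q * Z₂) :
    Z₁ * Z₂ = Z₂ * Z₁ := by
  obtain ⟨W, hW, key⟩ := exists_diagonalizer Q hQ hns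
  obtain ⟨h1, h2⟩ := unit_eqs hW
  obtain ⟨a1, a2⟩ := key Z₁ hz1
  obtain ⟨b1, b2⟩ := key Z₂ hz2
  have hAB := offdiag_mul_comm _ _ a1 a2 b1 b2
  calc Z₁ * Z₂ = (W * (Wᴴ * Z₁ * W) * Wᴴ) * (W * (Wᴴ * Z₂ * W) * Wᴴ) := by
        rw [expand_conj _ _ h2, expand_conj _ _ h2]
    _ = W * ((Wᴴ * Z₁ * W) * (Wᴴ * Z₂ * W)) * Wᴴ := conjMulKron _ _ _ h1
    _ = W * ((Wᴴ * Z₂ * W) * (Wᴴ * Z₁ * W)) * Wᴴ := by rw [hAB]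
    _ = (W * (Wᴴ * Z₂ * W) * Wᴴ) * (W * (Wᴴ * Z₁ * W) * Wᴴ) := (conjMulKron _ _ _ h1).symm
    _ = Z₂ * Z₁ := by rw [expand_conj _ _ h2, expand_conj _ _ h2]

lemma pick_herm (F : Fin 2 → Fin 2 → M2) (hFH : ∀ a b, (F a b)ᴴ = F b a)
    (hns : ¬ ∀ a b, ∃ c : ℂ, F a b = c • 1) :
    ∃ Q : M2, Q.IsHermitian ∧ (¬∃ c : ℂ, Q = c • 1) ∧
      (∀ Z : M2, (∀ a b, F a b * Z = Z * F a b) → Q * Z = Z * Q) := by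
  by_cases h00 : ∃ c : ℂ, F 0 0 = c • 1
  · by_cases h11 : ∃ c : ℂ, F 1 1 = c • 1
    · by_cases hS : ∃ c : ℂ, F 0 1 + F 1 0 = c • 1
      · by_cases hA : ∃ c : ℂ, Complex.I • (F 0 1 - F 1 0) = c • 1
        · exfalso
          apply hns
          obtain ⟨s, hs⟩ := hS
          obtain ⟨a, ha⟩ := hA
          have h01 : F 0 1 = ((s - Complex.I * a)/2) • 1 := by
            have e1 : (2 : ℂ) • F 0 1 = (F 0 1 + F 1 0) - Complex.I • (Complex.I • (F 0 1 - F 1 0)) := by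
              rw [smul_smul]
              simp [Complex.I_mul_I]
              module
            rw [hs, ha, smul_smul] at e1
            have : F 0 1 = (2:ℂ)⁻¹ • ((2:ℂ) • F 0 1) := by
              rw [smul_smul]; norm_num
            rw [this, e1]
            rw [← sub_smul, smul_smul]
            ring_nf
          have h10 : F 1 0 = ((s + Complex.I * a)/2) • 1 := by
            have e1 : (2 : ℂ) • F 1 0 = (F 0 1 + F 1 0) + Complex.I • (Complex.I • (F 0 1 - F 1 0)) := by
              rw [smul_smul]
              simp [Complex.I_mul_I]
              module
            rw [hs, ha, smul_smul] at e1
            have : F 1 0 = (2:ℂ)⁻¹ • ((2:ℂ) • F 1 0) := by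
              rw [smul_smul]; norm_num
            rw [this, e1]
            rw [← add_smul, smul_smul]
            ring_nf
          intro a' b'
          fin_cases a' <;> fin_cases b'
          · exact h00
          · exact ⟨_, h01⟩
          · exact ⟨_, h10⟩
          · exact h11
        · refine ⟨Complex.I • (F 0 1 - F 1 0), ?_, hA, fun Z hZ => ?_⟩
          · unfold Matrix.IsHermitian
            rw [Matrix.conjTranspose_smul, Matrix.conjTranspose_sub, hFH, hFH]
            simp only [Complex.star_def, Complex.conj_I]
            module
          · rw [Matrix.smul_mul, Matrix.mul_smul, Matrix.sub_mul, Matrix.mul_sub, hZ, hZ]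
      · refine ⟨F 0 1 + F 1 0, ?_, hS, fun Z hZ => ?_⟩
        · unfold Matrix.IsHermitian
          rw [Matrix.conjTranspose_add, hFH, hFH, add_comm]
        · rw [Matrix.add_mul, Matrix.mul_add, hZ, hZ]
    · exact ⟨F 1 1, hFH 1 1, h11, fun Z hZ => hZ 1 1⟩
  · exact ⟨F 0 0, hFH 0 0, h00, fun Z hZ => hZ 0 0⟩
set_option maxHeartbeats 1000000 in
/-- A two-qubit commuting Hermitian Hamiltonian is locally diagonalizable. -/
theorem stmt_0 (H : Matrix (Fin 2 × Fin 2) (Fin 2 × Fin 2) ℂ)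
    (hHerm : H.IsHermitian)
    (hcomm :
      (H ⊗ₖ (1 : Matrix (Fin 2) (Fin 2) ℂ)) *
        (Matrix.reindex (Equiv.prodAssoc (Fin 2) (Fin 2) (Fin 2)).symm
          (Equiv.prodAssoc (Fin 2) (Fin 2) (Fin 2)).symm
          ((1 : Matrix (Fin 2) (Fin 2) ℂ) ⊗ₖ H)) =
      (Matrix.reindex (Equiv.prodAssoc (Fin 2) (Fin 2) (Fin 2)).symm
          (Equiv.prodAssoc (Fin 2) (Fin 2) (Fin 2)).symm
          ((1 : Matrix (Fin 2) (Fin 2) ℂ) ⊗ₖ H)) *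
        (H ⊗ₖ (1 : Matrix (Fin 2) (Fin 2) ℂ))) :
    ∃ (U : Matrix (Fin 2) (Fin 2) ℂ) (d : Fin 2 × Fin 2 → ℝ),
      U ∈ Matrix.unitaryGroup (Fin 2) ℂ ∧
      H = (U ⊗ₖ U) * Matrix.diagonal (fun p => (d p : ℂ)) * (U ⊗ₖ U)ᴴ := by
  classical
  set B : Fin 2 → Fin 2 → M2 := fun i i' => Matrix.of (fun j n => H (i,j) (i',n)) with hBdef
  set Mm : Fin 2 → Fin 2 → M2 := fun k k' => Matrix.of (fun j n => H (j,k) (n,k')) with hMdef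
  have hBM : ∀ i i' k k', B i i' * Mm k k' = Mm k k' * B i i' := by
    intro i i' k k'
    ext j j'
    have hc := congrFun (congrFun hcomm ((i,j),k)) ((i',j'),k')
    fin_cases i <;> fin_cases i' <;> fin_cases k <;> fin_cases k' <;>
    · simp only [Matrix.mul_apply, Matrix.reindex_apply, Matrix.submatrix_apply,
        Matrix.kroneckerMap_apply, Matrix.one_apply, Equiv.prodAssoc_symm_apply,
        Fintype.sum_prod_type, Fin.sum_univ_two, Equiv.symm_symm, Equiv.prodAssoc_apply,
        mul_ite, mul_one, mul_zero, ite_mul, zero_mul, one_mul, Matrix.of_apply,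
        Fin.isValue, Fin.mk_zero, Fin.mk_one, Fin.reduceEq, reduceIte,
        add_zero, zero_add, hBdef, hMdef] at hc ⊢
      linear_combination hc
  have hBH : ∀ a b, (B a b)ᴴ = B b a := by
    intro a b
    ext j n
    simp only [Matrix.conjTranspose_apply, hBdef, Matrix.of_apply]
    exact hHerm.apply (b,j) (a,n)
  have hMH : ∀ a b, (Mm a b)ᴴ = Mm b a := by
    intro a b
    ext j n
    simp only [Matrix.conjTranspose_apply, hMdef, Matrix.of_apply]
    exact hHerm.apply (j,b) (n,a)
  by_cases hBs : ∀ a b : Fin 2, ∃ c : ℂ, B a b = c • 1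
  · -- H = N ⊗ 1
    have hHN : H = (Matrix.of (fun i i' => H (i,0) (i',0)) : M2) ⊗ₖ (1 : M2) := by
      ext ⟨i,j⟩ ⟨i',j'⟩
      obtain ⟨c, hc⟩ := hBs i i'
      have h1 := congrFun (congrFun hc j) j'
      have h2 := congrFun (congrFun hc 0) 0
      simp only [hBdef, Matrix.of_apply, Matrix.smul_apply, Matrix.one_apply, smul_eq_mul] at h1 h2
      simp only [Matrix.kroneckerMap_apply, Matrix.one_apply, Matrix.of_apply]
      rw [h1, h2]
      by_cases hjj : j = j' <;> simp [hjj]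
    have hN : (Matrix.of (fun i i' => H (i,0) (i',0)) : M2).IsHermitian := by
      ext i i'
      simp only [Matrix.conjTranspose_apply, Matrix.of_apply]
      exact hHerm.apply (i,0) (i',0)
    obtain ⟨V, hV, e, hNeq, _⟩ := spectral2 _ hN
    obtain ⟨hv1, hv2⟩ := unit_eqs hV
    refine ⟨V, fun p => e p.1, hV, ?_⟩
    have hdk : Matrix.diagonal (fun p : Fin 2 × Fin 2 => ((e p.1 : ℝ) : ℂ))
        = (Matrix.diagonal fun i => (e i : ℂ)) ⊗ₖ (1 : M2) := by
      rw [show (1 : M2) = Matrix.diagonal (fun _ => (1:ℂ)) from Matrix.diagonal_one.symm,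
        Matrix.diagonal_kronecker_diagonal]
      simp
    calc H = (Matrix.of (fun i i' => H (i,0) (i',0)) : M2) ⊗ₖ (1 : M2) := hHN
      _ = (V * Matrix.diagonal (fun i => (e i : ℂ)) * Vᴴ) ⊗ₖ (V * 1 * Vᴴ) := by
          rw [← hNeq, Matrix.mul_one, hv2]
      _ = (V ⊗ₖ V) * Matrix.diagonal (fun p : Fin 2 × Fin 2 => ((e p.1 : ℝ) : ℂ)) * (V ⊗ₖ V)ᴴ := by
          rw [hdk, kron_conjT, ← Matrix.mul_kronecker_mul, ← Matrix.mul_kronecker_mul]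
  · by_cases hMs : ∀ a b : Fin 2, ∃ c : ℂ, Mm a b = c • 1
    · -- H = 1 ⊗ M'
      have hHN : H = (1 : M2) ⊗ₖ (Matrix.of (fun k k' => H (0,k) (0,k')) : M2) := by
        ext ⟨i,j⟩ ⟨i',j'⟩
        obtain ⟨c, hc⟩ := hMs j j'
        have h1 := congrFun (congrFun hc i) i'
        have h2 := congrFun (congrFun hc 0) 0
        simp only [hMdef, Matrix.of_apply, Matrix.smul_apply, Matrix.one_apply, smul_eq_mul] at h1 h2
        simp only [Matrix.kroneckerMap_apply, Matrix.one_apply, Matrix.of_apply]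
        rw [h1, h2]
        by_cases hii : i = i' <;> simp [hii]
      have hN : (Matrix.of (fun k k' => H (0,k) (0,k')) : M2).IsHermitian := by
        ext k k'
        simp only [Matrix.conjTranspose_apply, Matrix.of_apply]
        exact hHerm.apply (0,k) (0,k')
      obtain ⟨V, hV, e, hNeq, _⟩ := spectral2 _ hN
      obtain ⟨hv1, hv2⟩ := unit_eqs hV
      refine ⟨V, fun p => e p.2, hV, ?_⟩
      have hdk : Matrix.diagonal (fun p : Fin 2 × Fin 2 => ((e p.2 : ℝ) : ℂ))
          = (1 : M2) ⊗ₖ (Matrix.diagonal fun i => (e i : ℂ)) := by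
        rw [show (1 : M2) = Matrix.diagonal (fun _ => (1:ℂ)) from Matrix.diagonal_one.symm,
          Matrix.diagonal_kronecker_diagonal]
        simp
      calc H = (1 : M2) ⊗ₖ (Matrix.of (fun k k' => H (0,k) (0,k')) : M2) := hHN
        _ = (V * 1 * Vᴴ) ⊗ₖ (V * Matrix.diagonal (fun i => (e i : ℂ)) * Vᴴ) := by
            rw [← hNeq, Matrix.mul_one, hv2]
        _ = (V ⊗ₖ V) * Matrix.diagonal (fun p : Fin 2 × Fin 2 => ((e p.2 : ℝ) : ℂ)) * (V ⊗ₖ V)ᴴ := by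
            rw [hdk, kron_conjT, ← Matrix.mul_kronecker_mul, ← Matrix.mul_kronecker_mul]
    · -- case 3
      obtain ⟨Q, hQH, hQns, hQprop⟩ := pick_herm Mm hMH hMs
      have hQB : ∀ a b, B a b * Q = Q * B a b :=
        fun a b => (hQprop (B a b) (fun k k' => (hBM a b k k').symm)).symm
      have hBBcomm : ∀ a b a' b', B a b * B a' b' = B a' b' * B a b :=
        fun a b a' b' => comm_of_comm_herm Q hQH hQns _ _ (hQB a b) (hQB a' b')
      obtain ⟨P, hPH, hPns, hPprop⟩ := pick_herm B hBH hBs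
      have hPB : ∀ a b, B a b * P = P * B a b :=
        fun a b => (hPprop (B a b) (fun a' b' => hBBcomm a' b' a b)).symm
      have hPM : ∀ k k', Mm k k' * P = P * Mm k k' :=
        fun k k' => (hPprop (Mm k k') (fun a b => hBM a b k k')).symm
      obtain ⟨W, hW, key⟩ := exists_diagonalizer P hPH hPns
      obtain ⟨hw1, hw2⟩ := unit_eqs hW
      have hBoff : ∀ a b, (Wᴴ * B a b * W) 0 1 = 0 ∧ (Wᴴ * B a b * W) 1 0 = 0 :=
        fun a b => key (B a b) (hPB a b)
      have hMoff : ∀ a b, (Wᴴ * Mm a b * W) 0 1 = 0 ∧ (Wᴴ * Mm a b * W) 1 0 = 0 :=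
        fun a b => key (Mm a b) (hPM a b)
      simp only [Matrix.mul_apply, Matrix.conjTranspose_apply, Fin.sum_univ_two,
        Matrix.of_apply, hBdef, hMdef] at hBoff hMoff
      set K : Matrix (Fin 2 × Fin 2) (Fin 2 × Fin 2) ℂ := W ⊗ₖ W with hKdef
      have hKH : Kᴴ = Wᴴ ⊗ₖ Wᴴ := kron_conjT W W
      have hK1 : Kᴴ * K = 1 := by
        rw [hKH, hKdef, ← Matrix.mul_kronecker_mul, hw1, Matrix.one_kronecker_one]
      have hK2 : K * Kᴴ = 1 := by
        rw [hKH, hKdef, ← Matrix.mul_kronecker_mul, hw2, Matrix.one_kronecker_one]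
      set H' : Matrix (Fin 2 × Fin 2) (Fin 2 × Fin 2) ℂ := Kᴴ * H * K with hH'def
      have claimB : ∀ i i', H' (i,0) (i',1) = 0 ∧ H' (i,1) (i',0) = 0 := by
        intro i i'
        constructor
        · simp only [hH'def, hKH, hKdef, Matrix.mul_apply, Matrix.kroneckerMap_apply,
            Matrix.conjTranspose_apply, Fintype.sum_prod_type, Fin.sum_univ_two, star_mul']
          linear_combination (star (W 0 i) * W 0 i') * (hBoff 0 0).1
            + (star (W 0 i) * W 1 i') * (hBoff 0 1).1
            + (star (W 1 i) * W 0 i') * (hBoff 1 0).1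
            + (star (W 1 i) * W 1 i') * (hBoff 1 1).1
        · simp only [hH'def, hKH, hKdef, Matrix.mul_apply, Matrix.kroneckerMap_apply,
            Matrix.conjTranspose_apply, Fintype.sum_prod_type, Fin.sum_univ_two, star_mul']
          linear_combination (star (W 0 i) * W 0 i') * (hBoff 0 0).2
            + (star (W 0 i) * W 1 i') * (hBoff 0 1).2
            + (star (W 1 i) * W 0 i') * (hBoff 1 0).2
            + (star (W 1 i) * W 1 i') * (hBoff 1 1).2
      have claimM : ∀ j j', H' (0,j) (1,j') = 0 ∧ H' (1,j) (0,j') = 0 := by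
        intro j j'
        constructor
        · simp only [hH'def, hKH, hKdef, Matrix.mul_apply, Matrix.kroneckerMap_apply,
            Matrix.conjTranspose_apply, Fintype.sum_prod_type, Fin.sum_univ_two, star_mul']
          linear_combination (star (W 0 j) * W 0 j') * (hMoff 0 0).1
            + (star (W 0 j) * W 1 j') * (hMoff 0 1).1
            + (star (W 1 j) * W 0 j') * (hMoff 1 0).1
            + (star (W 1 j) * W 1 j') * (hMoff 1 1).1
        · simp only [hH'def, hKH, hKdef, Matrix.mul_apply, Matrix.kroneckerMap_apply,
            Matrix.conjTranspose_apply, Fintype.sum_prod_type, Fin.sum_univ_two, star_mul']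
          linear_combination (star (W 0 j) * W 0 j') * (hMoff 0 0).2
            + (star (W 0 j) * W 1 j') * (hMoff 0 1).2
            + (star (W 1 j) * W 0 j') * (hMoff 1 0).2
            + (star (W 1 j) * W 1 j') * (hMoff 1 1).2
      have hH'H : H'.IsHermitian := by
        rw [Matrix.IsHermitian, hH'def, Matrix.conjTranspose_mul, Matrix.conjTranspose_mul,
          Matrix.conjTranspose_conjTranspose, hHerm.eq, Matrix.mul_assoc]
      have hreal : ∀ p, (((H' p p).re : ℝ) : ℂ) = H' p p := by
        intro p
        have h := hH'H.apply p p
        exact Complex.conj_eq_iff_re.mp h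
      refine ⟨W, fun p => (H' p p).re, hW, ?_⟩
      have hdiag : Matrix.diagonal (fun p : Fin 2 × Fin 2 => (((H' p p).re : ℝ) : ℂ)) = H' := by
        ext p q
        by_cases hpq : p = q
        · subst hpq
          rw [Matrix.diagonal_apply_eq]
          exact hreal p
        · rw [Matrix.diagonal_apply_ne _ hpq]
          symm
          obtain ⟨i, j⟩ := p
          obtain ⟨i', j'⟩ := q
          by_cases hii : i = i'
          · subst hii
            have hjj : j ≠ j' := fun h => hpq (by rw [h])
            fin_cases j <;> fin_cases j'
            · exact absurd rfl hjj
            · exact (claimB i i).1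
            · exact (claimB i i).2
            · exact absurd rfl hjj
          · fin_cases i <;> fin_cases i'
            · exact absurd rfl hii
            · exact (claimM j j').1
            · exact (claimM j j').2
            · exact absurd rfl hii
      rw [hdiag]
      calc H = (K * Kᴴ) * H * (K * Kᴴ) := by rw [hK2, Matrix.one_mul, Matrix.mul_one]
        _ = K * H' * Kᴴ := by rw [hH'def]; simp only [Matrix.mul_assoc]
end

section
/- Let U be a 2×2 complex unitary matrix, D a 4×4 diagonal complex matrix indexed by Fin 2 × Fin 2, and set H = (U ⊗ₖ U) * D * (U ⊗ₖ U)ᴴ. Let T be the 4×4 SWAP matrix. Then H ⊗ₖ I₂ commutes with I₂ ⊗ₖ H, H ⊗ₖ I₂ commutes with I₂ ⊗ₖ (T*H*T), and H commutes with T*H*T. -/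
open Matrix Kronecker

/-- The 4×4 SWAP matrix. -/
noncomputable def swapGate : Matrix (Fin 2 × Fin 2) (Fin 2 × Fin 2) ℂ :=
  Matrix.of fun p q => if p.1 = q.2 ∧ p.2 = q.1 then 1 else 0

lemma conjTranspose_kron {m n : Type*} [Fintype m] [Fintype n]
    (A : Matrix m m ℂ) (B : Matrix n n ℂ) : (A ⊗ₖ B)ᴴ = Aᴴ ⊗ₖ Bᴴ := by
  ext p q
  simp [conjTranspose_apply, kroneckerMap_apply, mul_comm]

lemma keyCommute {n : Type*} [Fintype n] [DecidableEq n]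
    (V : Matrix n n ℂ) (hV : Vᴴ * V = 1) (a b : n → ℂ) :
    Commute (V * Matrix.diagonal a * Vᴴ) (V * Matrix.diagonal b * Vᴴ) := by
  have h : ∀ a b : n → ℂ,
      (V * Matrix.diagonal a * Vᴴ) * (V * Matrix.diagonal b * Vᴴ)
        = V * Matrix.diagonal (fun i => a i * b i) * Vᴴ := by
    intro a b
    calc (V * Matrix.diagonal a * Vᴴ) * (V * Matrix.diagonal b * Vᴴ)
        = V * Matrix.diagonal a * (Vᴴ * V) * Matrix.diagonal b * Vᴴ := by
          simp only [Matrix.mul_assoc]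
      _ = V * Matrix.diagonal (fun i => a i * b i) * Vᴴ := by
          rw [hV, Matrix.mul_one, Matrix.mul_assoc V, Matrix.diagonal_mul_diagonal]
  have hab : (fun i => a i * b i) = fun i => b i * a i := funext fun i => mul_comm _ _
  unfold Commute SemiconjBy
  rw [h, h, hab]

lemma swapGate_eq : swapGate = (1 : Matrix (Fin 2 × Fin 2) (Fin 2 × Fin 2) ℂ).submatrix
    (Equiv.prodComm (Fin 2) (Fin 2)) id := by
  ext ⟨i, j⟩ ⟨k, l⟩
  simp [swapGate, Matrix.one_apply, Prod.ext_iff, and_comm]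

lemma swap_conj (M : Matrix (Fin 2 × Fin 2) (Fin 2 × Fin 2) ℂ) :
    swapGate * M * swapGate = M.submatrix (Equiv.prodComm (Fin 2) (Fin 2))
      (Equiv.prodComm (Fin 2) (Fin 2)) := by
  ext p q
  fin_cases p <;> fin_cases q <;>
    simp [swapGate, Matrix.mul_apply, Fin.sum_univ_two, Fintype.sum_prod_type]


lemma kron_swap_submatrix (A B : Matrix (Fin 2) (Fin 2) ℂ) :
    (A ⊗ₖ B).submatrix (Equiv.prodComm (Fin 2) (Fin 2)) (Equiv.prodComm (Fin 2) (Fin 2))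
      = B ⊗ₖ A := by
  ext ⟨a, b⟩ ⟨x, y⟩
  simp [kroneckerMap_apply, mul_comm]

lemma assoc_reindex (A B C : Matrix (Fin 2) (Fin 2) ℂ) :
    Matrix.reindex (Equiv.prodAssoc (Fin 2) (Fin 2) (Fin 2)).symm
      (Equiv.prodAssoc (Fin 2) (Fin 2) (Fin 2)).symm (A ⊗ₖ (B ⊗ₖ C)) = (A ⊗ₖ B) ⊗ₖ C := by
  ext ⟨⟨a, b⟩, c⟩ ⟨⟨x, y⟩, z⟩
  simp [Matrix.reindex_apply, kroneckerMap_apply, mul_assoc, Equiv.prodAssoc]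

/-- A locally diagonalizable Hamiltonian is commuting: `H⊗I` commutes with `I⊗H`,
`H⊗I` commutes with `I⊗(THT)`, and `H` commutes with `THT`. -/
theorem stmt_2 (U : Matrix (Fin 2) (Fin 2) ℂ) (hU : U ∈ Matrix.unitaryGroup (Fin 2) ℂ)
    (d : Fin 2 × Fin 2 → ℂ)
    (H : Matrix (Fin 2 × Fin 2) (Fin 2 × Fin 2) ℂ)
    (hH : H = (U ⊗ₖ U) * Matrix.diagonal d * (U ⊗ₖ U)ᴴ) :
    Commute (H ⊗ₖ (1 : Matrix (Fin 2) (Fin 2) ℂ))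
      (Matrix.reindex (Equiv.prodAssoc (Fin 2) (Fin 2) (Fin 2)).symm
        (Equiv.prodAssoc (Fin 2) (Fin 2) (Fin 2)).symm
        ((1 : Matrix (Fin 2) (Fin 2) ℂ) ⊗ₖ H)) ∧
    Commute (H ⊗ₖ (1 : Matrix (Fin 2) (Fin 2) ℂ))
      (Matrix.reindex (Equiv.prodAssoc (Fin 2) (Fin 2) (Fin 2)).symm
        (Equiv.prodAssoc (Fin 2) (Fin 2) (Fin 2)).symm
        ((1 : Matrix (Fin 2) (Fin 2) ℂ) ⊗ₖ (swapGate * H * swapGate))) ∧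
    Commute H (swapGate * H * swapGate) := by
  have hUs : Uᴴ * U = 1 := hU.1
  have hUs' : U * Uᴴ = 1 := hU.2
  set V := U ⊗ₖ U with hVdef
  have hVc : Vᴴ = Uᴴ ⊗ₖ Uᴴ := conjTranspose_kron U U
  have hV : Vᴴ * V = 1 := by
    rw [hVc, hVdef, ← Matrix.mul_kronecker_mul, hUs, Matrix.one_kronecker_one]
  set V3 := (U ⊗ₖ U) ⊗ₖ U with hV3def
  have hV3c : V3ᴴ = Vᴴ ⊗ₖ Uᴴ := conjTranspose_kron V U
  have hV3 : V3ᴴ * V3 = 1 := by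
    rw [hV3c, hV3def, ← Matrix.mul_kronecker_mul, hV, hUs, Matrix.one_kronecker_one]
  have hTHT : swapGate * H * swapGate
      = V * Matrix.diagonal (d ∘ (Equiv.prodComm (Fin 2) (Fin 2))) * Vᴴ := by
    rw [hH, swap_conj,
      Matrix.submatrix_mul _ _ _ (Equiv.prodComm (Fin 2) (Fin 2)) _
        (Equiv.prodComm (Fin 2) (Fin 2)).bijective,
      Matrix.submatrix_mul _ _ _ (Equiv.prodComm (Fin 2) (Fin 2)) _
        (Equiv.prodComm (Fin 2) (Fin 2)).bijective,
      Matrix.submatrix_diagonal_equiv]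
    have hVs : V.submatrix ⇑(Equiv.prodComm (Fin 2) (Fin 2)) ⇑(Equiv.prodComm (Fin 2) (Fin 2))
        = V := by rw [hVdef]; exact kron_swap_submatrix U U
    have hVcs : Vᴴ.submatrix ⇑(Equiv.prodComm (Fin 2) (Fin 2)) ⇑(Equiv.prodComm (Fin 2) (Fin 2))
        = Vᴴ := by rw [hVc]; exact kron_swap_submatrix Uᴴ Uᴴ
    rw [hVs, hVcs]
  have hform : ∀ e : Fin 2 × Fin 2 → ℂ,
      (V * Matrix.diagonal e * Vᴴ) ⊗ₖ (1 : Matrix (Fin 2) (Fin 2) ℂ)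
        = V3 * Matrix.diagonal (fun p => e p.1) * V3ᴴ := by
    intro e
    have h1 : (1 : Matrix (Fin 2) (Fin 2) ℂ) = U * (1 : Matrix (Fin 2) (Fin 2) ℂ) * Uᴴ := by
      rw [Matrix.mul_one, hUs']
    conv_lhs => rw [h1]
    rw [Matrix.mul_kronecker_mul, Matrix.mul_kronecker_mul, hV3c]
    congr 1
    have : (1 : Matrix (Fin 2) (Fin 2) ℂ) = Matrix.diagonal (fun _ => (1 : ℂ)) := by
      simp
    rw [this, Matrix.diagonal_kronecker_diagonal]
    simp
    rfl
  have hform2 : ∀ e : Fin 2 × Fin 2 → ℂ,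
      Matrix.reindex (Equiv.prodAssoc (Fin 2) (Fin 2) (Fin 2)).symm
        (Equiv.prodAssoc (Fin 2) (Fin 2) (Fin 2)).symm
        ((1 : Matrix (Fin 2) (Fin 2) ℂ) ⊗ₖ (V * Matrix.diagonal e * Vᴴ))
        = V3 * Matrix.diagonal (fun p => e (p.1.2, p.2)) * V3ᴴ := by
    intro e
    have h1 : (1 : Matrix (Fin 2) (Fin 2) ℂ) = U * (1 : Matrix (Fin 2) (Fin 2) ℂ) * Uᴴ := by
      rw [Matrix.mul_one, hUs']
    conv_lhs => rw [h1, Matrix.mul_kronecker_mul, Matrix.mul_kronecker_mul]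
    set ea := (Equiv.prodAssoc (Fin 2) (Fin 2) (Fin 2)).symm
    have hmul : ∀ (M N : Matrix (Fin 2 × (Fin 2 × Fin 2)) (Fin 2 × (Fin 2 × Fin 2)) ℂ),
        Matrix.reindex ea ea (M * N) = Matrix.reindex ea ea M * Matrix.reindex ea ea N := by
      intro M N
      simp [Matrix.reindex_apply, Matrix.submatrix_mul_equiv]
    rw [hmul, hmul, assoc_reindex, ← hV3def]
    congr 1
    · congr 1
      have : ((1 : Matrix (Fin 2) (Fin 2) ℂ) ⊗ₖ Matrix.diagonal e)
          = Matrix.diagonal (fun p : Fin 2 × (Fin 2 × Fin 2) => e p.2) := by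
        have h2 : (1 : Matrix (Fin 2) (Fin 2) ℂ) = Matrix.diagonal (fun _ => (1 : ℂ)) := by
          simp
        rw [h2, Matrix.diagonal_kronecker_diagonal]
        simp
      rw [this, Matrix.reindex_apply, Matrix.submatrix_diagonal_equiv]
      rfl
    · rw [hV3c, hVc]
      exact assoc_reindex Uᴴ Uᴴ Uᴴ
  refine ⟨?_, ?_, ?_⟩
  · rw [hH, hform, hform2]
    exact keyCommute V3 hV3 _ _
  · rw [hTHT, hH, hform, hform2]
    exact keyCommute V3 hV3 _ _
  · rw [hTHT, hH]
    exact keyCommute V hV _ _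
end

section
/- Let α, β be nonzero complex numbers with |α|² + |β|² = 1, let U = !![α, -conj(β); β, conj(α)], let a, b, c, d be real numbers with b + c ≠ a + d, and set H = (U ⊗ₖ U) * diag₄(a,b,c,d) * (U ⊗ₖ U)ᴴ. Then there exists t ∈ ℝ such that the vector exp(i·t·H).mulVec (e₀ ⊗ᵥ e₀) ∈ (Fin 2 × Fin 2 → ℂ) is entangled, i.e. it is not equal to u ⊗ᵥ w for any u, w : Fin 2 → ℂ. -/
open Matrix Kronecker

/-- `diag₄ (a,b,c,d)`. -/
noncomputable def diag4 (a b c d : ℂ) : Matrix (Fin 2 × Fin 2) (Fin 2 × Fin 2) ℂ :=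
  Matrix.diagonal (fun p => !![a, b; c, d] p.1 p.2)

/-- Tensor product of two one-qubit vectors. -/
def tensorVec (u w : Fin 2 → ℂ) : Fin 2 × Fin 2 → ℂ := fun p => u p.1 * w p.2

lemma segre (M : Matrix (Fin 2) (Fin 2) ℂ) (x : Fin 2 × Fin 2 → ℂ) :
    ((M ⊗ₖ M).mulVec x) (0,0) * ((M ⊗ₖ M).mulVec x) (1,1)
      - ((M ⊗ₖ M).mulVec x) (0,1) * ((M ⊗ₖ M).mulVec x) (1,0)
    = M.det ^ 2 * (x (0,0) * x (1,1) - x (0,1) * x (1,0)) := by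
  simp [Matrix.mulVec, dotProduct, Fintype.sum_prod_type, Fin.sum_univ_two,
    Matrix.det_fin_two]
  ring

lemma kt_conjTranspose (M : Matrix (Fin 2) (Fin 2) ℂ) :
    (M ⊗ₖ M)ᴴ = Mᴴ ⊗ₖ Mᴴ := by
  ext p q
  simp [Matrix.conjTranspose_apply, Matrix.kroneckerMap_apply]

/-- If `b + c ≠ a + d` (and `α, β ≠ 0`), then the Hamiltonian
`H = (U⊗U) diag₄(a,b,c,d) (U⊗U)ᴴ` creates entanglement from the basis state `|00⟩`
at some time `t`. -/
theorem stmt_6 (α β : ℂ) (hα : α ≠ 0) (hβ : β ≠ 0)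
    (hnorm : ‖α‖ ^ 2 + ‖β‖ ^ 2 = 1)
    (U : Matrix (Fin 2) (Fin 2) ℂ)
    (hU : U = !![α, -(starRingEnd ℂ) β; β, (starRingEnd ℂ) α])
    (a b c d : ℝ) (habcd : b + c ≠ a + d)
    (H : Matrix (Fin 2 × Fin 2) (Fin 2 × Fin 2) ℂ)
    (hH : H = (U ⊗ₖ U) * diag4 (a : ℂ) (b : ℂ) (c : ℂ) (d : ℂ) * (U ⊗ₖ U)ᴴ) :
    ∃ t : ℝ, ¬∃ u w : Fin 2 → ℂ,
      (NormedSpace.exp (Complex.I • (t : ℂ) • H)).mulVec (tensorVec ![1, 0] ![1, 0]) =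
        tensorVec u w := by
  have hn : α * (starRingEnd ℂ) α + β * (starRingEnd ℂ) β = 1 := by
    rw [Complex.mul_conj, Complex.mul_conj]
    rw [Complex.sq_norm, Complex.sq_norm] at hnorm
    exact_mod_cast hnorm
  have hUU : U * Uᴴ = 1 := by
    subst hU
    ext i j
    fin_cases i <;> fin_cases j <;>
      simp [Matrix.mul_apply, Fin.sum_univ_two, Matrix.conjTranspose_apply, Matrix.one_apply] <;>
      ring_nf <;>
      first
        | linear_combination hn
        | ring
  set A : Matrix (Fin 2 × Fin 2) (Fin 2 × Fin 2) ℂ := U ⊗ₖ U with hA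
  have hAA : A * Aᴴ = 1 := by
    rw [hA, kt_conjTranspose, ← Matrix.mul_kronecker_mul, hUU, Matrix.one_kronecker_one]
  have hAunit : IsUnit A := by
    rw [Matrix.isUnit_iff_isUnit_det]
    exact IsUnit.of_mul_eq_one _ (by rw [← Matrix.det_mul, hAA, Matrix.det_one])
  have hAinv : A⁻¹ = Aᴴ := Matrix.inv_eq_right_inv hAA
  -- choose time
  have hΔ : (a + d) - (b + c) ≠ 0 := sub_ne_zero.mpr (fun h => habcd h.symm)
  refine ⟨Real.pi / ((a + d) - (b + c)), ?_⟩
  set t : ℝ := Real.pi / ((a + d) - (b + c)) with ht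
  rintro ⟨u, w, heq⟩
  -- rewrite the exponential
  have hDiag : Complex.I • (t : ℂ) • H =
      A * Matrix.diagonal (fun p => Complex.I * t * (!![(a:ℂ), b; c, d] p.1 p.2)) * A⁻¹ := by
    rw [hH, diag4, smul_smul, hAinv]
    have hD : (Matrix.diagonal fun p : Fin 2 × Fin 2 => Complex.I * (t : ℂ) * (!![(a:ℂ), b; c, d] p.1 p.2))
        = (Complex.I * (t : ℂ)) • Matrix.diagonal (fun p : Fin 2 × Fin 2 => (!![(a:ℂ), b; c, d] p.1 p.2)) := by
      rw [← Matrix.diagonal_smul]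
      congr 1
    rw [hD, mul_smul_comm, smul_mul_assoc]
  have hexp : NormedSpace.exp (Complex.I • (t : ℂ) • H) =
      A * Matrix.diagonal (fun p => Complex.exp (Complex.I * t * (!![(a:ℂ), b; c, d] p.1 p.2)))
        * Aᴴ := by
    rw [hDiag, ← hAinv, Matrix.exp_conj _ _ hAunit, Matrix.exp_diagonal, hAinv]
    congr 2
    rw [Pi.exp_def]
    funext p
    rw [← Complex.exp_eq_exp_ℂ]
  -- compute Aᴴ.mulVec e00
  have hz : Aᴴ.mulVec (tensorVec ![1, 0] ![1, 0]) =
      tensorVec ![(starRingEnd ℂ) α, -β] ![(starRingEnd ℂ) α, -β] := by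
    rw [hA, kt_conjTranspose]
    ext p
    obtain ⟨i, j⟩ := p
    fin_cases i <;> fin_cases j <;>
      simp [Matrix.mulVec, dotProduct, Fintype.sum_prod_type, Fin.sum_univ_two,
        tensorVec, hU, Matrix.conjTranspose_apply]
  set v : Fin 2 → ℂ := ![(starRingEnd ℂ) α, -β] with hv
  set E : Matrix (Fin 2 × Fin 2) (Fin 2 × Fin 2) ℂ :=
    Matrix.diagonal (fun p => Complex.exp (Complex.I * t * (!![(a:ℂ), b; c, d] p.1 p.2))) with hE
  set y : Fin 2 × Fin 2 → ℂ :=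
    (NormedSpace.exp (Complex.I • (t : ℂ) • H)).mulVec (tensorVec ![1, 0] ![1, 0]) with hy
  have hy2 : y = A.mulVec (E.mulVec (Aᴴ.mulVec (tensorVec ![1, 0] ![1, 0]))) := by
    rw [hy, hexp, ← Matrix.mulVec_mulVec, ← Matrix.mulVec_mulVec]
  have hy3 : y = A.mulVec (fun p =>
      Complex.exp (Complex.I * t * (!![(a:ℂ), b; c, d] p.1 p.2)) * (v p.1 * v p.2)) := by
    have hinner : (Matrix.diagonal fun p : Fin 2 × Fin 2 =>
          Complex.exp (Complex.I * t * (!![(a:ℂ), b; c, d] p.1 p.2))).mulVec (tensorVec v v)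
        = fun p => Complex.exp (Complex.I * t * (!![(a:ℂ), b; c, d] p.1 p.2)) * (v p.1 * v p.2) := by
      funext p
      rw [Matrix.mulVec_diagonal]
      rfl
    rw [hy2, hz, hE, hinner]
  -- Segre invariant of y
  have hdet : U.det = 1 := by
    rw [hU, Matrix.det_fin_two_of]
    linear_combination hn
  have hseg : y (0,0) * y (1,1) - y (0,1) * y (1,0)
      = (v 0)^2 * (v 1)^2 *
        (Complex.exp (Complex.I * t * a) * Complex.exp (Complex.I * t * d)
          - Complex.exp (Complex.I * t * b) * Complex.exp (Complex.I * t * c)) := by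
    rw [hy3, hA, segre, hdet]
    simp [Matrix.cons_val_zero, Matrix.cons_val_one]
    ring
  -- product vector has zero Segre invariant
  have hzero : y (0,0) * y (1,1) - y (0,1) * y (1,0) = 0 := by
    rw [heq]; simp [tensorVec]; ring
  -- but the RHS is nonzero
  have hv0 : v 0 ≠ 0 := by simp [hv, hα]
  have hv1 : v 1 ≠ 0 := by simp [hv, hβ]
  have hexpne : Complex.exp (Complex.I * t * a) * Complex.exp (Complex.I * t * d)
      ≠ Complex.exp (Complex.I * t * b) * Complex.exp (Complex.I * t * c) := by
    rw [← Complex.exp_add, ← Complex.exp_add]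
    intro h
    have h2 : Complex.exp ((Complex.I * t * a + Complex.I * t * d)
        - (Complex.I * t * b + Complex.I * t * c)) = 1 := by
      rw [Complex.exp_sub, h, div_self (Complex.exp_ne_zero _)]
    have harg : (Complex.I * t * a + Complex.I * t * d) - (Complex.I * t * b + Complex.I * t * c)
        = Real.pi * Complex.I := by
      have hΔc : ((a:ℂ) + d - (b + c)) ≠ 0 := by
        have := Complex.ofReal_ne_zero.mpr hΔ
        push_cast at this
        exact this
      have : (t : ℂ) * (((a:ℂ) + d) - (b + c)) = (Real.pi : ℂ) := by
        rw [ht]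
        push_cast
        rw [div_mul_eq_mul_div, mul_div_assoc, div_self hΔc, mul_one]
      linear_combination Complex.I * this
    rw [harg, Complex.exp_pi_mul_I] at h2
    norm_num at h2
  rw [hzero] at hseg
  exact hexpne (by
    have := hseg.symm
    rcases mul_eq_zero.mp this with h | h
    · rcases mul_eq_zero.mp h with h' | h'
      · exact absurd h' (pow_ne_zero 2 hv0)
      · exact absurd h' (pow_ne_zero 2 hv1)
    · exact sub_eq_zero.mp h)
end

section
/- Let α, β ∈ ℂ and a', d', t ∈ ℝ, let D(t) = diag₄(exp(i·a'·t), exp(i·t), exp(i·t), exp(i·d'·t)), and let χ : Fin 2 → ℂ be the vector (α, β). For every ψ : Fin 2 → ℂ, the vector φ : Fin 2 → ℂ defined by φ(j) = Σ_{i : Fin 2} conj(χ(i)) · (D(t).mulVec (ψ ⊗ᵥ χ))(i,j) satisfies φ = L̃(t).mulVec ψ, where L̃(t) = !![|α|²·exp(i·a'·t), α·conj(β)·exp(i·t); conj(α)·β·exp(i·t), |β|²·exp(i·d'·t)]. Moreover det L̃(t) = |α|²·|β|²·(exp(i·(a'+d')·t) − exp(2·i·t)). -/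
open Matrix

/-- The postselection gadget `L(t)`: tensoring with the ancilla `χ = U|0⟩ = (α,β)`,
applying `D(t)`, and postselecting the first qubit onto `χ` implements the matrix
`L̃(t)`, whose determinant is `|α|²|β|²(exp(i(a'+d')t) − exp(2it))`. -/
theorem stmt_7 (α β : ℂ) (a' d' t : ℝ)
    (D : Matrix (Fin 2 × Fin 2) (Fin 2 × Fin 2) ℂ)
    (hD : D = diag4 (Complex.exp (Complex.I * (a' : ℂ) * (t : ℂ)))
      (Complex.exp (Complex.I * (t : ℂ))) (Complex.exp (Complex.I * (t : ℂ)))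
      (Complex.exp (Complex.I * (d' : ℂ) * (t : ℂ))))
    (χ : Fin 2 → ℂ) (hχ : χ = ![α, β])
    (L : Matrix (Fin 2) (Fin 2) ℂ)
    (hL : L = !![((‖α‖ : ℝ) : ℂ) ^ 2 * Complex.exp (Complex.I * (a' : ℂ) * (t : ℂ)),
        α * (starRingEnd ℂ) β * Complex.exp (Complex.I * (t : ℂ));
        (starRingEnd ℂ) α * β * Complex.exp (Complex.I * (t : ℂ)),
        ((‖β‖ : ℝ) : ℂ) ^ 2 * Complex.exp (Complex.I * (d' : ℂ) * (t : ℂ))]) :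
    (∀ ψ : Fin 2 → ℂ,
      (fun j : Fin 2 =>
          ∑ i : Fin 2, (starRingEnd ℂ) (χ i) * D.mulVec (tensorVec ψ χ) (i, j)) =
        L.mulVec ψ) ∧
    L.det = ((‖α‖ : ℝ) : ℂ) ^ 2 * ((‖β‖ : ℝ) : ℂ) ^ 2 *
      (Complex.exp (Complex.I * ((a' : ℂ) + (d' : ℂ)) * (t : ℂ)) -
        Complex.exp (2 * Complex.I * (t : ℂ))) := by
  subst hD hχ hL
  have h : ∀ z : ℂ, (((‖z‖ : ℝ) : ℂ)) ^ 2 = (starRingEnd ℂ) z * z := by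
    intro z
    rw [← Complex.normSq_eq_conj_mul_self, Complex.normSq_eq_norm_sq]
    push_cast
    ring
  constructor
  · intro ψ
    funext j
    simp only [Matrix.mulVec, dotProduct, diag4, tensorVec, Matrix.diagonal,
      Fin.sum_univ_two, Fintype.sum_prod_type]
    fin_cases j <;>
      simp [Fin.sum_univ_two, Matrix.of_apply, Prod.ext_iff, ← Complex.normSq_eq_norm_sq,
        h] <;> ring
  · rw [Matrix.det_fin_two_of]
    simp only [h]
    rw [show (2:ℂ) * Complex.I * (t:ℂ) = Complex.I * t + Complex.I * t by ring,
      show Complex.I * ((a':ℂ) + (d':ℂ)) * (t:ℂ)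
          = Complex.I * a' * t + Complex.I * d' * t by ring,
      Complex.exp_add, Complex.exp_add]
    ring_nf
end

section
/- Let α, β ∈ ℂ and a', d', t ∈ ℝ, let D(t) = diag₄(exp(i·a'·t), exp(i·t), exp(i·t), exp(i·d'·t)), and let χ : Fin 2 → ℂ be the vector (−conj(β), conj(α)). For every ψ : Fin 2 → ℂ, the vector φ : Fin 2 → ℂ defined by φ(j) = Σ_{i : Fin 2} conj(χ(i)) · (D(t).mulVec (ψ ⊗ᵥ χ))(i,j) satisfies φ = M̃(t).mulVec ψ, where M̃(t) = !![|β|²·exp(i·a'·t), −α·conj(β)·exp(i·t); −conj(α)·β·exp(i·t), |α|²·exp(i·d'·t)]. -/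
open Matrix

/-- The postselection gadget `M(t)`: tensoring with the ancilla `χ = U|1⟩ = (−conj β, conj α)`,
applying `D(t)`, and postselecting the first qubit onto `χ` implements the matrix `M̃(t)`. -/
theorem stmt_8 (α β : ℂ) (a' d' t : ℝ)
    (D : Matrix (Fin 2 × Fin 2) (Fin 2 × Fin 2) ℂ)
    (hD : D = diag4 (Complex.exp (Complex.I * (a' : ℂ) * (t : ℂ)))
      (Complex.exp (Complex.I * (t : ℂ))) (Complex.exp (Complex.I * (t : ℂ)))
      (Complex.exp (Complex.I * (d' : ℂ) * (t : ℂ))))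
    (χ : Fin 2 → ℂ) (hχ : χ = ![-(starRingEnd ℂ) β, (starRingEnd ℂ) α])
    (M : Matrix (Fin 2) (Fin 2) ℂ)
    (hM : M = !![((‖β‖ : ℝ) : ℂ) ^ 2 * Complex.exp (Complex.I * (a' : ℂ) * (t : ℂ)),
        -(α * (starRingEnd ℂ) β * Complex.exp (Complex.I * (t : ℂ)));
        -((starRingEnd ℂ) α * β * Complex.exp (Complex.I * (t : ℂ))),
        ((‖α‖ : ℝ) : ℂ) ^ 2 * Complex.exp (Complex.I * (d' : ℂ) * (t : ℂ))]) :
    ∀ ψ : Fin 2 → ℂ,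
      (fun j : Fin 2 =>
          ∑ i : Fin 2, (starRingEnd ℂ) (χ i) * D.mulVec (tensorVec ψ χ) (i, j)) =
        M.mulVec ψ := by
  intro ψ
  subst hD hχ hM
  funext j
  have hab : (((‖α‖ : ℝ) : ℂ))^2 = (starRingEnd ℂ) α * α := by
    rw [← Complex.ofReal_pow, Complex.sq_norm, Complex.normSq_eq_conj_mul_self]
  have hbb : (((‖β‖ : ℝ) : ℂ))^2 = (starRingEnd ℂ) β * β := by
    rw [← Complex.ofReal_pow, Complex.sq_norm, Complex.normSq_eq_conj_mul_self]
  fin_cases j <;>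
    simp [diag4, tensorVec, Matrix.mulVec, Matrix.diagonal, dotProduct,
      Fin.sum_univ_two, Fintype.sum_prod_type, hab, hbb] <;> ring
end

section
/- Let α, β ∈ ℂ and a', d', t ∈ ℝ, let D(t) = diag₄(exp(i·a'·t), exp(i·t), exp(i·t), exp(i·d'·t)), let χ : Fin 2 → ℂ be the vector (α, β) and χ' : Fin 2 → ℂ be the vector (−conj(β), conj(α)). For every ψ : Fin 2 → ℂ, the vector φ : Fin 2 → ℂ defined by φ(i) = Σ_{j : Fin 2} conj(χ'(j)) · (D(t).mulVec (ψ ⊗ᵥ χ))(i,j) satisfies φ(0) = α·β·(exp(i·t) − exp(i·a'·t))·ψ(0) and φ(1) = α·β·(exp(i·d'·t) − exp(i·t))·ψ(1); that is, the gadget acts as the diagonal matrix α·β·diag(exp(i·t) − exp(i·a'·t), exp(i·d'·t) − exp(i·t)). -/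
open Matrix

/-- The postselection gadget `N(t)`: the input `ψ` on the first wire, ancilla
`χ = U|0⟩` on the second, applying `D(t)` and postselecting the second qubit onto
`U|1⟩` acts as the diagonal matrix `α·β·diag(exp(it) − exp(ia't), exp(id't) − exp(it))`. -/
theorem stmt_9 (α β : ℂ) (a' d' t : ℝ)
    (D : Matrix (Fin 2 × Fin 2) (Fin 2 × Fin 2) ℂ)
    (hD : D = diag4 (Complex.exp (Complex.I * (a' : ℂ) * (t : ℂ)))
      (Complex.exp (Complex.I * (t : ℂ))) (Complex.exp (Complex.I * (t : ℂ)))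
      (Complex.exp (Complex.I * (d' : ℂ) * (t : ℂ))))
    (χ χ' : Fin 2 → ℂ) (hχ : χ = ![α, β])
    (hχ' : χ' = ![-(starRingEnd ℂ) β, (starRingEnd ℂ) α]) :
    ∀ ψ : Fin 2 → ℂ,
      (∑ j : Fin 2, (starRingEnd ℂ) (χ' j) * D.mulVec (tensorVec ψ χ) (0, j)) =
        α * β * (Complex.exp (Complex.I * (t : ℂ)) -
          Complex.exp (Complex.I * (a' : ℂ) * (t : ℂ))) * ψ 0 ∧
      (∑ j : Fin 2, (starRingEnd ℂ) (χ' j) * D.mulVec (tensorVec ψ χ) (1, j)) =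
        α * β * (Complex.exp (Complex.I * (d' : ℂ) * (t : ℂ)) -
          Complex.exp (Complex.I * (t : ℂ))) * ψ 1 := by
  intro ψ
  subst hD hχ hχ'
  constructor <;>
  · simp [diag4, tensorVec, Matrix.mulVec, Matrix.diagonal, Fin.sum_univ_two,
      dotProduct, Fintype.sum_prod_type]
    ring
end

section
/- Let α, β ∈ ℂ and a', d', t₁, t₂ ∈ ℝ, and write T = t₁ + t₂. Define the 2×2 complex matrices L̃ = !![|α|²·exp(i·a'·T), α·conj(β)·exp(i·t₂); conj(α)·β·exp(i·t₁), |β|²·exp(i·d'·T)], M̃ = !![|β|²·exp(i·a'·T), −α·conj(β)·exp(i·t₂); −conj(α)·β·exp(i·t₁), |α|²·exp(i·d'·T)], and N = !![exp(i·(d'−a')·T/2), 0; 0, exp(−i·(d'−a')·T/2)]. Then N * M̃ * N * L̃ = |α|²·|β|²·(exp(i·(a'+d')·T) − exp(i·T)) • I₂, i.e. the phase-corrected gadget N·M̃·N is, up to the scalar det L̃, the inverse of the gadget L̃. -/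
open Matrix

/-- The phase-corrected gadget `N·M̃·N` is, up to the scalar `det L̃`, the inverse
of the gadget `L̃`. -/
theorem stmt_10 (α β : ℂ) (a' d' t₁ t₂ : ℝ) (T : ℝ) (hT : T = t₁ + t₂)
    (L M N : Matrix (Fin 2) (Fin 2) ℂ)
    (hL : L = !![((‖α‖ : ℝ) : ℂ) ^ 2 * Complex.exp (Complex.I * (a' : ℂ) * (T : ℂ)),
        α * (starRingEnd ℂ) β * Complex.exp (Complex.I * (t₂ : ℂ));
        (starRingEnd ℂ) α * β * Complex.exp (Complex.I * (t₁ : ℂ)),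
        ((‖β‖ : ℝ) : ℂ) ^ 2 * Complex.exp (Complex.I * (d' : ℂ) * (T : ℂ))])
    (hM : M = !![((‖β‖ : ℝ) : ℂ) ^ 2 * Complex.exp (Complex.I * (a' : ℂ) * (T : ℂ)),
        -(α * (starRingEnd ℂ) β * Complex.exp (Complex.I * (t₂ : ℂ)));
        -((starRingEnd ℂ) α * β * Complex.exp (Complex.I * (t₁ : ℂ))),
        ((‖α‖ : ℝ) : ℂ) ^ 2 * Complex.exp (Complex.I * (d' : ℂ) * (T : ℂ))])
    (hN : N = !![Complex.exp (Complex.I * ((d' : ℂ) - (a' : ℂ)) * (T : ℂ) / 2), 0;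
        0, Complex.exp (-(Complex.I * ((d' : ℂ) - (a' : ℂ)) * (T : ℂ) / 2))]) :
    N * M * N * L =
      (((‖α‖ : ℝ) : ℂ) ^ 2 * ((‖β‖ : ℝ) : ℂ) ^ 2 *
        (Complex.exp (Complex.I * ((a' : ℂ) + (d' : ℂ)) * (T : ℂ)) -
          Complex.exp (Complex.I * (T : ℂ)))) • (1 : Matrix (Fin 2) (Fin 2) ℂ) := by
  subst hT hL hM hN
  have h1 : ((‖α‖ : ℝ) : ℂ) ^ 2 = α * (starRingEnd ℂ) α := by
    rw [Complex.mul_conj]; norm_cast; exact Complex.sq_norm α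
  have h2 : ((‖β‖ : ℝ) : ℂ) ^ 2 = β * (starRingEnd ℂ) β := by
    rw [Complex.mul_conj]; norm_cast; exact Complex.sq_norm β
  set c : ℂ := Complex.I * ((d' : ℂ) - (a' : ℂ)) * ((t₁ : ℂ) + (t₂ : ℂ)) / 2 with hc
  set A : ℂ := Complex.exp (Complex.I * (a' : ℂ) * ((t₁ : ℂ) + (t₂ : ℂ))) with hA
  set D : ℂ := Complex.exp (Complex.I * (d' : ℂ) * ((t₁ : ℂ) + (t₂ : ℂ))) with hD
  have f1 : Complex.exp c * Complex.exp (-c) = 1 := by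
    rw [← Complex.exp_add, add_neg_cancel, Complex.exp_zero]
  have f2 : Complex.exp c * Complex.exp c * A = D := by
    rw [hA, hD, ← Complex.exp_add, ← Complex.exp_add, hc]; congr 1; ring
  have f3 : Complex.exp (-c) * Complex.exp (-c) * D = A := by
    rw [hA, hD, ← Complex.exp_add, ← Complex.exp_add, hc]; congr 1; ring
  have f4 : Complex.exp (Complex.I * (t₂ : ℂ)) * Complex.exp (Complex.I * (t₁ : ℂ)) =
      Complex.exp (Complex.I * ((t₁ : ℂ) + (t₂ : ℂ))) := by
    rw [← Complex.exp_add]; congr 1; ring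
  have f5 : D * A = Complex.exp (Complex.I * ((a' : ℂ) + (d' : ℂ)) * ((t₁ : ℂ) + (t₂ : ℂ))) := by
    rw [hA, hD, ← Complex.exp_add]; congr 1; ring
  set K : ℂ := α * (starRingEnd ℂ) α * β * (starRingEnd ℂ) β with hK
  set E1 : ℂ := Complex.exp (Complex.I * (t₁ : ℂ))
  set E2 : ℂ := Complex.exp (Complex.I * (t₂ : ℂ))
  ext i j
  fin_cases i <;> fin_cases j <;>
    simp [Matrix.mul_apply, Fin.sum_univ_succ, Matrix.one_apply, h1, h2]
  · linear_combination (K * A) * f2 + K * f5 - (K * E2 * E1) * f1 - K * f4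
  · linear_combination (α * (starRingEnd ℂ) β * β * (starRingEnd ℂ) β * E2) * f2 -
      (α * (starRingEnd ℂ) β * β * (starRingEnd ℂ) β * E2 * D) * f1
  · linear_combination ((starRingEnd ℂ) α * β * E1 * α * (starRingEnd ℂ) α) * f3 -
      ((starRingEnd ℂ) α * β * E1 * α * (starRingEnd ℂ) α * A) * f1
  · linear_combination (K * D) * f3 + K * f5 - (K * E2 * E1) * f1 - K * f4
end

section
/- Let a' ∈ ℝ, set d' = −2 − a', and define r : ℝ → ℂ by r(t) = (exp(i·t) − exp(i·a'·t)) / (exp(i·d'·t) − exp(i·t)). For every s ∈ ℝ such that exp(i·d'·s) ≠ exp(i·s) and exp(−i·d'·s) ≠ exp(−i·s), one has r(s) · r(−s) = (1 − Real.cos((1 − a')·s)) / (1 − Real.cos((3 + a')·s)); in particular r(s)·r(−s) is a nonnegative real number. -/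
private lemma exI (u : ℝ) : Complex.exp (Complex.I * (u : ℂ)) =
    (Real.cos u : ℂ) + (Real.sin u : ℂ) * Complex.I := by
  rw [mul_comm, Complex.exp_mul_I, ← Complex.ofReal_cos, ← Complex.ofReal_sin]

private lemma key (x y : ℝ) :
    (Complex.exp (Complex.I * x) - Complex.exp (Complex.I * y)) *
      (Complex.exp (-(Complex.I * x)) - Complex.exp (-(Complex.I * y))) =
    ((2 - 2 * Real.cos (x - y) : ℝ) : ℂ) := by
  have hx : -(Complex.I * (x : ℂ)) = Complex.I * ((-x : ℝ) : ℂ) := by push_cast; ring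
  have hy : -(Complex.I * (y : ℂ)) = Complex.I * ((-y : ℝ) : ℂ) := by push_cast; ring
  rw [hx, hy, exI, exI, exI, exI, Real.cos_neg, Real.cos_neg, Real.sin_neg, Real.sin_neg]
  have h2 : (Complex.I : ℂ) ^ 2 = -1 := Complex.I_sq
  push_cast [Real.cos_sub]
  linear_combination (-(Complex.sin x - Complex.sin y) ^ 2 : ℂ) * h2 +
    Complex.sin_sq_add_cos_sq (x : ℂ) + Complex.sin_sq_add_cos_sq (y : ℂ)

/-- The product `r(s)·r(−s)` of gadget ratios equals a nonnegative real number,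
namely `(1 − cos((1−a')s))/(1 − cos((3+a')s))`. -/
theorem stmt_11 (a' d' : ℝ) (hd' : d' = -2 - a')
    (r : ℝ → ℂ)
    (hr : ∀ t : ℝ, r t =
      (Complex.exp (Complex.I * (t : ℂ)) - Complex.exp (Complex.I * (a' : ℂ) * (t : ℂ))) /
      (Complex.exp (Complex.I * (d' : ℂ) * (t : ℂ)) - Complex.exp (Complex.I * (t : ℂ))))
    (s : ℝ)
    (h1 : Complex.exp (Complex.I * (d' : ℂ) * (s : ℂ)) ≠ Complex.exp (Complex.I * (s : ℂ)))
    (h2 : Complex.exp (-(Complex.I * (d' : ℂ) * (s : ℂ))) ≠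
      Complex.exp (-(Complex.I * (s : ℂ)))) :
    r s * r (-s) =
      (((1 - Real.cos ((1 - a') * s)) / (1 - Real.cos ((3 + a') * s)) : ℝ) : ℂ) ∧
    0 ≤ (1 - Real.cos ((1 - a') * s)) / (1 - Real.cos ((3 + a') * s)) := by
  have cast1 : (Complex.I * (a' : ℂ) * (s : ℂ)) = Complex.I * ((a' * s : ℝ) : ℂ) := by
    push_cast; ring
  have cast2 : (Complex.I * (d' : ℂ) * (s : ℂ)) = Complex.I * ((d' * s : ℝ) : ℂ) := by
    push_cast; ring
  have castn : ((-s : ℝ) : ℂ) = -(s : ℂ) := by push_cast; ring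
  -- products
  have hN : (Complex.exp (Complex.I * (s : ℂ)) - Complex.exp (Complex.I * ((a' * s : ℝ) : ℂ))) *
      (Complex.exp (-(Complex.I * (s : ℂ))) - Complex.exp (-(Complex.I * ((a' * s : ℝ) : ℂ)))) =
      ((2 - 2 * Real.cos ((1 - a') * s) : ℝ) : ℂ) := by
    have := key s (a' * s)
    rw [this]; norm_num; ring_nf
  have hD : (Complex.exp (Complex.I * ((d' * s : ℝ) : ℂ)) - Complex.exp (Complex.I * (s : ℂ))) *
      (Complex.exp (-(Complex.I * ((d' * s : ℝ) : ℂ))) - Complex.exp (-(Complex.I * (s : ℂ)))) =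
      ((2 - 2 * Real.cos ((3 + a') * s) : ℝ) : ℂ) := by
    have := key (d' * s) s
    rw [this]
    have : d' * s - s = -((3 + a') * s) := by rw [hd']; ring
    rw [this, Real.cos_neg]
  have hD1 : Complex.exp (Complex.I * ((d' * s : ℝ) : ℂ)) - Complex.exp (Complex.I * (s : ℂ)) ≠ 0 := by
    rw [← cast2]; exact sub_ne_zero.mpr h1
  have hD2 : Complex.exp (-(Complex.I * ((d' * s : ℝ) : ℂ))) - Complex.exp (-(Complex.I * (s : ℂ))) ≠ 0 := by
    rw [← cast2]; exact sub_ne_zero.mpr h2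
  have hDne : ((2 - 2 * Real.cos ((3 + a') * s) : ℝ) : ℂ) ≠ 0 := by
    rw [← hD]; exact mul_ne_zero hD1 hD2
  have hDneR : (2 - 2 * Real.cos ((3 + a') * s) : ℝ) ≠ 0 := by
    intro h; exact hDne (by rw [h]; norm_num)
  have hDpos : 0 < 1 - Real.cos ((3 + a') * s) := by
    have hle : Real.cos ((3 + a') * s) ≤ 1 := Real.cos_le_one _
    rcases lt_or_eq_of_le hle with h | h
    · linarith
    · exfalso; apply hDneR; rw [h]; ring
  have hNpos : 0 ≤ 1 - Real.cos ((1 - a') * s) := by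
    have := Real.cos_le_one ((1 - a') * s); linarith
  constructor
  · rw [hr s, hr (-s), castn]
    simp only [mul_neg]
    rw [cast1, cast2]
    rw [div_mul_div_comm, hN, hD, ← Complex.ofReal_div]
    congr 1
    rw [show (2 - 2 * Real.cos ((1 - a') * s)) = 2 * (1 - Real.cos ((1 - a') * s)) by ring,
        show (2 - 2 * Real.cos ((3 + a') * s)) = 2 * (1 - Real.cos ((3 + a') * s)) by ring,
        mul_div_mul_left _ _ (two_ne_zero)]
  · exact div_nonneg hNpos (le_of_lt hDpos)
end

section
/- Let a' ∈ ℝ with a' ∉ {1, −1, −3}, set d' = −2 − a', and define r : ℝ → ℂ by r(t) = (exp(i·t) − exp(i·a'·t)) / (exp(i·d'·t) − exp(i·t)). Then for every θ ∈ (0, 2π) there exist k ∈ ℕ with k ≥ 1, times t : Fin k → ℝ with exp(i·d'·t(j)) ≠ exp(i·t(j)) for every j, and a real number c > 0, such that ∏_{j} r(t(j)) = c · exp(i·θ). -/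
open Real

private lemma sin_ne_aux (x : ℝ) (h1 : x ≠ 0) (h2 : |x| < Real.pi) : Real.sin x ≠ 0 := by
  intro h
  rcases Real.sin_eq_zero_iff.mp h with ⟨n, hn⟩
  have hpi := Real.pi_pos
  have habs : |(n:ℝ)| * Real.pi < Real.pi := by
    rw [show |(n:ℝ)| * Real.pi = |(n:ℝ) * Real.pi| by rw [abs_mul, abs_of_pos hpi], hn]
    exact h2
  have hn1 : |(n:ℝ)| < 1 := by nlinarith
  have hn0 : n = 0 := by
    have : ((|n|:ℤ):ℝ) < 1 := by push_cast; exact hn1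
    exact Int.abs_lt_one_iff.mp (by exact_mod_cast this)
  simp [hn0] at hn
  exact h1 hn.symm

private lemma key_aux (x y : ℂ) :
    Complex.exp (Complex.I*(x+y)) - Complex.exp (Complex.I*(x-y)) =
    Complex.exp (Complex.I*x) * (2*Complex.I*Complex.sin y) := by
  rw [Complex.sin, show Complex.I*(x+y) = Complex.I*x + Complex.I*y by ring,
    show Complex.I*(x-y) = Complex.I*x + -(Complex.I*y) by ring,
    show -y*Complex.I = -(Complex.I*y) by ring, show y*Complex.I = Complex.I*y by ring,
    Complex.exp_add, Complex.exp_add]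
  have h := Complex.I_mul_I
  field_simp
  linear_combination
    (Complex.exp (Complex.I*y) - Complex.exp (-(Complex.I*y))) * h

/-- Products of the gadget ratios `r(t)` can realize any prescribed relative
phase `θ ∈ (0, 2π)`, up to a positive real scalar. -/
theorem stmt_13 (a' d' : ℝ) (ha1 : a' ≠ 1) (ha2 : a' ≠ -1) (ha3 : a' ≠ -3)
    (hd' : d' = -2 - a')
    (r : ℝ → ℂ)
    (hr : ∀ t : ℝ, r t =
      (Complex.exp (Complex.I * (t : ℂ)) - Complex.exp (Complex.I * (a' : ℂ) * (t : ℂ))) /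
      (Complex.exp (Complex.I * (d' : ℂ) * (t : ℂ)) - Complex.exp (Complex.I * (t : ℂ)))) :
    ∀ θ ∈ Set.Ioo (0 : ℝ) (2 * π),
      ∃ (k : ℕ) (_ : 1 ≤ k) (t : Fin k → ℝ),
        (∀ j : Fin k, Complex.exp (Complex.I * (d' : ℂ) * (t j : ℂ)) ≠
          Complex.exp (Complex.I * (t j : ℂ))) ∧
        ∃ c : ℝ, 0 < c ∧
          (∏ j : Fin k, r (t j)) = (c : ℂ) * Complex.exp (Complex.I * (θ : ℂ)) := by
  intro θ hθ
  obtain ⟨hθ0, hθ2⟩ := hθ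
  have hpi := Real.pi_pos
  set α : ℝ := 1 + a' with hα
  set b : ℝ := (1 - a') / 2 with hb
  set c0 : ℝ := (3 + a') / 2 with hc0
  have hαne : α ≠ 0 := by rw [hα]; intro h; apply ha2; linarith
  have hbne : b ≠ 0 := by rw [hb]; intro h; apply ha1; linarith
  have hcne : c0 ≠ 0 := by rw [hc0]; intro h; apply ha3; linarith
  have hαpos : 0 < |α| := abs_pos.mpr hαne
  obtain ⟨K, hK⟩ := exists_nat_gt ((|b| + |c0|) * θ / (π * |α|))
  set k : ℕ := 2 * (K + 1) with hk
  have hk1 : 1 ≤ k := by omega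
  have hkpos : (0:ℝ) < (k:ℝ) := by exact_mod_cast Nat.pos_of_ne_zero (by omega)
  have hkα : (k:ℝ) * α ≠ 0 := mul_ne_zero (ne_of_gt hkpos) hαne
  set t0 : ℝ := θ / ((k:ℝ) * α) with ht0
  have ht0ne : t0 ≠ 0 := div_ne_zero (ne_of_gt hθ0) hkα
  have hKb : (|b| + |c0|) * θ < K * (π * |α|) := (div_lt_iff₀ (by positivity)).mp hK
  have hkK : (K:ℝ) ≤ (k:ℝ) := by exact_mod_cast (by omega : K ≤ k)
  have habs_t0 : |t0| = θ / ((k:ℝ) * |α|) := by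
    rw [ht0, abs_div, abs_of_pos hθ0, abs_mul, Nat.abs_cast]
  have hbt : |b * t0| < π := by
    rw [abs_mul, habs_t0, ← mul_div_assoc, div_lt_iff₀ (by positivity)]
    nlinarith [abs_nonneg b, abs_nonneg c0,
      mul_nonneg (mul_nonneg (sub_nonneg.mpr hkK) hpi.le) (abs_nonneg α),
      mul_nonneg (abs_nonneg c0) hθ0.le]
  have hct : |c0 * t0| < π := by
    rw [abs_mul, habs_t0, ← mul_div_assoc, div_lt_iff₀ (by positivity)]
    nlinarith [abs_nonneg b, abs_nonneg c0,
      mul_nonneg (mul_nonneg (sub_nonneg.mpr hkK) hpi.le) (abs_nonneg α),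
      mul_nonneg (abs_nonneg b) hθ0.le]
  have hsb : Real.sin (b * t0) ≠ 0 := sin_ne_aux _ (mul_ne_zero hbne ht0ne) hbt
  have hsc : Real.sin (c0 * t0) ≠ 0 := sin_ne_aux _ (mul_ne_zero hcne ht0ne) hct
  -- scalar identities
  have e1 : (α/2)*t0 + b*t0 = t0 := by rw [hα, hb]; ring
  have e2 : (α/2)*t0 - b*t0 = a' * t0 := by rw [hα, hb]; ring
  have e3 : (-(α/2))*t0 + (-c0)*t0 = d' * t0 := by rw [hα, hc0, hd']; ring
  have e4 : (-(α/2))*t0 - (-c0)*t0 = t0 := by rw [hα, hc0]; ring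
  -- factorizations
  have hnum : Complex.exp (Complex.I * (t0:ℂ)) - Complex.exp (Complex.I * (a':ℂ) * (t0:ℂ)) =
      Complex.exp (Complex.I * (((α/2)*t0 : ℝ):ℂ)) * (2*Complex.I*Complex.sin ((b*t0 : ℝ):ℂ)) := by
    rw [show Complex.I * (t0:ℂ) =
          Complex.I * ((((α/2)*t0:ℝ):ℂ) + ((b*t0:ℝ):ℂ)) by
        rw [← Complex.ofReal_add, e1],
        show Complex.I * (a':ℂ) * (t0:ℂ) =
          Complex.I * ((((α/2)*t0:ℝ):ℂ) - ((b*t0:ℝ):ℂ)) by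
        rw [← Complex.ofReal_sub, e2]; push_cast; ring]
    exact key_aux _ _
  have hsinc : Complex.sin (((-c0)*t0 : ℝ):ℂ) = ((-Real.sin (c0*t0) : ℝ):ℂ) := by
    rw [← Complex.ofReal_sin, show (-c0)*t0 = -(c0*t0) by ring, Real.sin_neg]
  have hsinb : Complex.sin ((b*t0 : ℝ):ℂ) = ((Real.sin (b*t0) : ℝ):ℂ) := by
    rw [← Complex.ofReal_sin]
  have hden : Complex.exp (Complex.I * (d':ℂ) * (t0:ℂ)) - Complex.exp (Complex.I * (t0:ℂ)) =
      Complex.exp (Complex.I * (((-(α/2))*t0 : ℝ):ℂ)) *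
        (2*Complex.I*((-Real.sin (c0*t0) : ℝ):ℂ)) := by
    rw [show Complex.I * (d':ℂ) * (t0:ℂ) =
          Complex.I * ((((-(α/2))*t0:ℝ):ℂ) + (((-c0)*t0:ℝ):ℂ)) by
        rw [← Complex.ofReal_add, e3]; push_cast; ring,
        show Complex.I * (t0:ℂ) =
          Complex.I * ((((-(α/2))*t0:ℝ):ℂ) - (((-c0)*t0:ℝ):ℂ)) by
        rw [← Complex.ofReal_sub, e4]]
    rw [key_aux, hsinc]
  have hdenne : Complex.exp (Complex.I * (((-(α/2))*t0 : ℝ):ℂ)) *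
      (2*Complex.I*((-Real.sin (c0*t0) : ℝ):ℂ)) ≠ 0 := by
    refine mul_ne_zero (Complex.exp_ne_zero _) ?_
    simp only [ne_eq, mul_eq_zero, not_or, Complex.ofReal_eq_zero, neg_eq_zero]
    exact ⟨⟨two_ne_zero, Complex.I_ne_zero⟩, hsc⟩
  set ρ : ℝ := -(Real.sin (b*t0) / Real.sin (c0*t0)) with hρ
  have hρne : ρ ≠ 0 := by
    rw [hρ]
    simp only [ne_eq, neg_eq_zero, div_eq_zero_iff, not_or]
    exact ⟨hsb, hsc⟩
  have hexp : Complex.exp (Complex.I*((α*t0:ℝ):ℂ)) * Complex.exp (Complex.I*(((-(α/2))*t0:ℝ):ℂ))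
      = Complex.exp (Complex.I*(((α/2)*t0:ℝ):ℂ)) := by
    rw [← Complex.exp_add]
    congr 1
    push_cast
    ring
  have hscC : ((Real.sin (c0*t0) : ℝ):ℂ) ≠ 0 := Complex.ofReal_ne_zero.mpr hsc
  have hrt : r t0 = (ρ:ℂ) * Complex.exp (Complex.I * ((α*t0 : ℝ):ℂ)) := by
    rw [hr, hnum, hden, div_eq_iff hdenne, hsinb, hρ, Complex.ofReal_neg, Complex.ofReal_div,
      Complex.ofReal_neg, ← hexp]
    generalize Complex.exp (Complex.I * ((α*t0:ℝ):ℂ)) = EA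
    generalize Complex.exp (Complex.I * ((-(α/2)*t0:ℝ):ℂ)) = E2
    generalize hSb : ((Real.sin (b*t0):ℝ):ℂ) = Sb
    generalize hSc : ((Real.sin (c0*t0):ℝ):ℂ) = Sc
    rw [hSc] at hscC
    field_simp
  have hexpne : Complex.exp (Complex.I * (d':ℂ) * (t0:ℂ)) ≠ Complex.exp (Complex.I * (t0:ℂ)) := by
    apply sub_ne_zero.mp
    rw [hden]
    exact hdenne
  have ekt : (k:ℝ) * (α*t0) = θ := by
    rw [ht0]
    field_simp
  refine ⟨k, hk1, fun _ => t0, fun j => hexpne, ρ^k, ?_, ?_⟩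
  · exact Even.pow_pos (by rw [hk]; exact even_two_mul _) hρne
  · calc (∏ _j : Fin k, r t0) = (r t0)^k := by
          rw [Finset.prod_const, Finset.card_fin]
      _ = (ρ:ℂ)^k * Complex.exp (Complex.I * (θ:ℂ)) := by
          rw [hrt, mul_pow, ← Complex.exp_nat_mul]
          congr 1
          rw [show Complex.I * (θ:ℂ) = Complex.I * ((θ:ℝ):ℂ) by norm_cast, ← ekt]
          push_cast
          ring
      _ = ((ρ^k : ℝ):ℂ) * Complex.exp (Complex.I * (θ:ℂ)) := by push_cast; ring
end

section
/- Let a' ∈ ℝ with a' ∉ {1, −1, −3}. Then for every real c > 0 there exist k ∈ ℕ and times s : Fin k → ℝ such that Real.cos((3 + a')·s(j)) ≠ 1 for every j and ∏_{j} (1 − Real.cos((1 − a')·s(j))) / (1 − Real.cos((3 + a')·s(j))) = c. -/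
open Real Filter Set

private lemma aux_cos_lt_one {x : ℝ} (h0 : 0 < x) (h2 : x < 2 * Real.pi) :
    Real.cos x < 1 := by
  rcases lt_or_eq_of_le (Real.cos_le_one x) with h | h
  · exact h
  · exfalso
    have := (Real.cos_eq_one_iff_of_lt_of_lt (by linarith) h2).mp h
    linarith

private lemma aux_neg_one_lt_cos {x : ℝ} (h0 : 0 < x) (h2 : x < Real.pi) :
    -1 < Real.cos x := by
  have hcoshalf : 0 < Real.cos (x / 2) := by
    apply Real.cos_pos_of_mem_Ioo
    constructor <;> [linarith; linarith]
  have hsq : Real.cos (x / 2) ^ 2 = 1 / 2 + Real.cos x / 2 := by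
    have := Real.cos_sq (x / 2)
    rwa [show 2 * (x / 2) = x by ring] at this
  nlinarith [hcoshalf, sq_nonneg (Real.cos (x/2))]

/-- Products of pairs of gadget ratios `r(s)·r(−s)` realize any prescribed
positive real number `c`. -/
theorem stmt_14 (a' : ℝ) (ha1 : a' ≠ 1) (ha2 : a' ≠ -1) (ha3 : a' ≠ -3) :
    ∀ c : ℝ, 0 < c →
      ∃ (k : ℕ) (s : Fin k → ℝ),
        (∀ j : Fin k, Real.cos ((3 + a') * s j) ≠ 1) ∧
        (∏ j : Fin k,
          (1 - Real.cos ((1 - a') * s j)) / (1 - Real.cos ((3 + a') * s j))) = c := by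
  intro c hc
  have hpi : (0:ℝ) < Real.pi := Real.pi_pos
  set A := |1 - a'| with hAdef
  set B := |3 + a'| with hBdef
  have hA : 0 < A := abs_pos.mpr (by intro h; apply ha1; linarith)
  have hB : 0 < B := abs_pos.mpr (by intro h; apply ha3; linarith)
  have hAB : A ≠ B := by
    intro h
    rcases abs_eq_abs.mp h with h' | h'
    · exact ha2 (by linarith)
    · linarith
  -- rewriting the statement's cosines for positive s
  have hcosA : ∀ s : ℝ, 0 < s → Real.cos ((1 - a') * s) = Real.cos (A * s) := by
    intro s hs
    rw [← Real.cos_abs ((1 - a') * s), abs_mul, abs_of_pos hs]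
  have hcosB : ∀ s : ℝ, 0 < s → Real.cos ((3 + a') * s) = Real.cos (B * s) := by
    intro s hs
    rw [← Real.cos_abs ((3 + a') * s), abs_mul, abs_of_pos hs]
  set g : ℝ → ℝ := fun s => (1 - Real.cos (A * s)) / (1 - Real.cos (B * s)) with hg
  set T := 2 * Real.pi / B with hTdef
  have hTpos : 0 < T := by positivity
  have hBT : B * T = 2 * Real.pi := by
    rw [hTdef]; field_simp [hB.ne']
  have hdenom : ∀ s : ℝ, 0 < s → s < T → 0 < 1 - Real.cos (B * s) := by
    intro s h0 h1
    have h2 : B * s < 2 * Real.pi := by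
      calc B * s < B * T := by exact mul_lt_mul_of_pos_left h1 hB
      _ = 2 * Real.pi := hBT
    have := aux_cos_lt_one (by positivity) h2
    linarith
  have hcontN : Continuous fun s : ℝ => 1 - Real.cos (A * s) :=
    continuous_const.sub (Real.continuous_cos.comp (continuous_const.mul continuous_id))
  have hcontD : Continuous fun s : ℝ => 1 - Real.cos (B * s) :=
    continuous_const.sub (Real.continuous_cos.comp (continuous_const.mul continuous_id))
  have hgcont : ContinuousOn g (Set.Ioo 0 T) := by
    apply ContinuousOn.div hcontN.continuousOn hcontD.continuousOn
    intro s hs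
    exact ne_of_gt (hdenom s hs.1 hs.2)
  have KEY : ∃ w v : ℝ, 0 ≤ w ∧ w < 1 ∧ 1 < v ∧
      ∀ c', w < c' → c' < v → ∃ s, 0 < s ∧ s < T ∧ g s = c' := by
    rcases lt_or_gt_of_ne hAB with hlt | hgt
    · -- A < B : small w = g(π/B) < 1, unbounded above, take v = 2
      set s4 := Real.pi / B with hs4def
      have hs4pos : 0 < s4 := by positivity
      have hs4T : s4 < T := by
        rw [hs4def, hTdef]
        apply div_lt_div_of_pos_right (by linarith) hB
      have hBs4 : B * s4 = Real.pi := by rw [hs4def]; field_simp [hB.ne']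
      have hAs4pos : 0 < A * s4 := by positivity
      have hAs4lt : A * s4 < Real.pi := by
        calc A * s4 < B * s4 := mul_lt_mul_of_pos_right hlt hs4pos
        _ = Real.pi := hBs4
      have hnum4 : 0 < 1 - Real.cos (A * s4) ∧ 1 - Real.cos (A * s4) < 2 := by
        constructor
        · have := aux_cos_lt_one hAs4pos (by linarith)
          linarith
        · have := aux_neg_one_lt_cos hAs4pos hAs4lt
          linarith
      have hgs4 : g s4 = (1 - Real.cos (A * s4)) / 2 := by
        rw [hg]; simp only; rw [hBs4, Real.cos_pi]; norm_num
      refine ⟨g s4, 2, ?_, ?_, by norm_num, ?_⟩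
      · rw [hgs4]; exact div_nonneg hnum4.1.le (by norm_num)
      · rw [hgs4]; linarith [hnum4.2]
      · intro c' hwc hc2
        -- find s5 close to T with g s5 > 2
        have hATpos : 0 < A * T := by positivity
        have hATlt : A * T < 2 * Real.pi := by
          calc A * T < B * T := mul_lt_mul_of_pos_right hlt hTpos
          _ = 2 * Real.pi := hBT
        have hNT : 0 < 1 - Real.cos (A * T) := by
          have := aux_cos_lt_one hATpos hATlt
          linarith
        have htend : Tendsto (fun s => (1 - Real.cos (A * s)) - 2 * (1 - Real.cos (B * s)))
            (nhdsWithin T (Set.Iio T)) (nhds (1 - Real.cos (A * T))) := by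
          have h1 : Tendsto (fun s => (1 - Real.cos (A * s)) - 2 * (1 - Real.cos (B * s)))
              (nhds T) (nhds ((1 - Real.cos (A * T)) - 2 * (1 - Real.cos (B * T)))) :=
            (hcontN.sub (continuous_const.mul hcontD)).tendsto T
          rw [hBT, Real.cos_two_pi] at h1
          simpa using h1.mono_left nhdsWithin_le_nhds
        have hev1 : ∀ᶠ s in nhdsWithin T (Set.Iio T),
            0 < (1 - Real.cos (A * s)) - 2 * (1 - Real.cos (B * s)) :=
          htend.eventually (eventually_gt_nhds hNT)
        have hev2 : ∀ᶠ s in nhdsWithin T (Set.Iio T), s ∈ Set.Ioo s4 T :=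
          Ioo_mem_nhdsLT_of_mem ⟨hs4T, le_refl T⟩
        obtain ⟨s5, hval, hmem⟩ := (hev1.and hev2).exists
        have hd5 : 0 < 1 - Real.cos (B * s5) := hdenom s5 (lt_trans hs4pos hmem.1) hmem.2
        have hgs5 : 2 < g s5 := by
          rw [hg]
          simp only
          rw [lt_div_iff₀ hd5]
          linarith
        have hsub : Set.Icc s4 s5 ⊆ Set.Ioo 0 T := fun x hx =>
          ⟨lt_of_lt_of_le hs4pos hx.1, lt_of_le_of_lt hx.2 hmem.2⟩
        have := intermediate_value_Icc (le_of_lt hmem.1) (hgcont.mono hsub)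
        obtain ⟨s, hsmem, hseq⟩ := this ⟨le_of_lt hwc, by linarith⟩
        exact ⟨s, lt_of_lt_of_le hs4pos hsmem.1, lt_of_le_of_lt hsmem.2 hmem.2, hseq⟩
    · -- A > B : values from 0 up to g(π/A) > 1
      set s3 := Real.pi / A with hs3def
      set s1 := 2 * Real.pi / A with hs1def
      have hs3pos : 0 < s3 := by positivity
      have hs31 : s3 < s1 := by
        rw [hs3def, hs1def]
        apply div_lt_div_of_pos_right (by linarith) hA
      have hs1T : s1 < T := by
        rw [hs1def, hTdef]
        exact div_lt_div_of_pos_left (by linarith) hB hgt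
      have hAs1 : A * s1 = 2 * Real.pi := by rw [hs1def]; field_simp [hA.ne']
      have hAs3 : A * s3 = Real.pi := by rw [hs3def]; field_simp [hA.ne']
      have hgs1 : g s1 = 0 := by
        rw [hg]; simp only
        rw [hAs1, Real.cos_two_pi]
        norm_num
      have hBs3pos : 0 < B * s3 := by positivity
      have hBs3lt : B * s3 < Real.pi := by
        calc B * s3 < A * s3 := mul_lt_mul_of_pos_right hgt hs3pos
        _ = Real.pi := hAs3
      have hd3 : 0 < 1 - Real.cos (B * s3) ∧ 1 - Real.cos (B * s3) < 2 := by
        constructor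
        · have := aux_cos_lt_one hBs3pos (by linarith)
          linarith
        · have := aux_neg_one_lt_cos hBs3pos hBs3lt
          linarith
      have hgs3 : g s3 = 2 / (1 - Real.cos (B * s3)) := by
        rw [hg]; simp only
        rw [hAs3, Real.cos_pi]
        norm_num
      have hv1 : 1 < g s3 := by
        rw [hgs3]
        rw [lt_div_iff₀ hd3.1]
        linarith [hd3.2]
      refine ⟨0, g s3, le_refl 0, by norm_num, hv1, ?_⟩
      intro c' h0c hcv
      have hsub : Set.Icc s3 s1 ⊆ Set.Ioo 0 T := fun x hx =>
        ⟨lt_of_lt_of_le hs3pos hx.1, lt_of_le_of_lt hx.2 hs1T⟩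
      have := intermediate_value_Icc' (le_of_lt hs31) (hgcont.mono hsub)
      obtain ⟨s, hsmem, hseq⟩ := this ⟨by rw [hgs1]; exact le_of_lt h0c, le_of_lt hcv⟩
      exact ⟨s, lt_of_lt_of_le hs3pos hsmem.1, lt_of_le_of_lt hsmem.2 hs1T, hseq⟩
  obtain ⟨w, v, hw0, hw1, hv1, hkey⟩ := KEY
  obtain ⟨k1, hk1⟩ := pow_unbounded_of_one_lt c hv1
  obtain ⟨k2, hk2⟩ := exists_pow_lt_of_lt_one hc hw1
  set k := k1 + k2 + 1 with hkdef
  have hkne : k ≠ 0 := by omega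
  set c' := c ^ ((k : ℝ)⁻¹) with hc'def
  have hc'pos : 0 < c' := Real.rpow_pos_of_pos hc _
  have hc'k : c' ^ k = c := Real.rpow_inv_natCast_pow hc.le hkne
  have hwc : w < c' := by
    apply lt_of_pow_lt_pow_left₀ k hc'pos.le
    calc w ^ k ≤ w ^ k2 := pow_le_pow_of_le_one hw0 hw1.le (by omega)
    _ < c := hk2
    _ = c' ^ k := hc'k.symm
  have hcv : c' < v := by
    apply lt_of_pow_lt_pow_left₀ k (by linarith : (0:ℝ) ≤ v)
    calc c' ^ k = c := hc'k
    _ < v ^ k1 := hk1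
    _ ≤ v ^ k := pow_le_pow_right₀ hv1.le (by omega)
  obtain ⟨s, hs0, hsT, hgs⟩ := hkey c' hwc hcv
  refine ⟨k, fun _ => s, ?_, ?_⟩
  · intro j
    rw [hcosB s hs0]
    apply ne_of_lt
    apply aux_cos_lt_one (by positivity)
    calc B * s < B * T := mul_lt_mul_of_pos_left hsT hB
    _ = 2 * Real.pi := hBT
  · have hfac : ∀ j : Fin k,
        (1 - Real.cos ((1 - a') * s)) / (1 - Real.cos ((3 + a') * s)) = c' := by
      intro j
      rw [hcosA s hs0, hcosB s hs0]
      exact hgs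
    calc (∏ _j : Fin k, (1 - Real.cos ((1 - a') * s)) / (1 - Real.cos ((3 + a') * s)))
        = ∏ _j : Fin k, c' := Finset.prod_congr rfl (fun j _ => hfac j)
    _ = c' ^ k := by rw [Finset.prod_const, Finset.card_univ, Fintype.card_fin]
    _ = c := hc'k
end

section
/- Let α, β be nonzero complex numbers and let a' ∈ ℝ with a' ∉ {1, −1, −3}. For v ∈ ℝ define the 2×2 complex matrix g(v) = !![(a'+1)·exp(−2·i·v), (α/β)·(1−a')·exp(i·(1+a')·v); (β/α)·(3+a')·exp(−i·(1+a')·v), −(a'+1)·exp(−2·i·v)]. Then the smallest Lie subalgebra over ℝ of the Lie algebra of 2×2 complex matrices (with the commutator bracket) containing the set {g(v) : v ∈ ℝ, Real.sin(2·v) ≠ 0} is exactly the set of traceless 2×2 complex matrices sl(2,ℂ). -/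
open Matrix

attribute [local instance 100] LieRing.ofAssociativeRing

/- ### Analytic auxiliary lemmas -/

private lemma dense_sin_ne : Dense {w : ℝ | Real.sin (2*w) ≠ 0} := by
  rw [Metric.dense_iff]
  intro x r hr
  by_cases hx : Real.sin (2*x) ≠ 0
  · exact ⟨x, Metric.mem_ball_self hr, hx⟩
  · push_neg at hx
    set δ : ℝ := min (r/2) (Real.pi/4) with hδdef
    have hδpos : 0 < δ := lt_min (by linarith) (by positivity)
    have hδle : δ ≤ Real.pi/4 := min_le_right _ _
    refine ⟨x + δ, ?_, ?_⟩
    · rw [Metric.mem_ball, Real.dist_eq]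
      have : |x + δ - x| = δ := by rw [show x + δ - x = δ by ring, abs_of_pos hδpos]
      rw [this]; exact lt_of_le_of_lt (min_le_left _ _) (by linarith)
    · have hsin : Real.sin (2*(x+δ)) = Real.cos (2*x) * Real.sin (2*δ) := by
        rw [show 2*(x+δ) = 2*x + 2*δ by ring, Real.sin_add, hx]; ring
      have hc : Real.cos (2*x) ≠ 0 := by
        intro h
        have := Real.sin_sq_add_cos_sq (2*x)
        rw [hx, h] at this; norm_num at this
      have hs : Real.sin (2*δ) > 0 := by
        apply Real.sin_pos_of_pos_of_lt_pi (by linarith)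
        have := Real.pi_pos; linarith
      simp only [Set.mem_setOf_eq, hsin]
      exact mul_ne_zero hc (ne_of_gt hs)

private lemma ext_zero {f : ℝ → ℝ} (hf : Continuous f)
    (h : ∀ w, Real.sin (2*w) ≠ 0 → f w = 0) : ∀ w, f w = 0 := by
  have := Continuous.ext_on dense_sin_ne hf continuous_const (fun w hw => h w hw)
  intro w; exact congrFun this w

private lemma int_ne_pm1 {n : ℤ} (hn0 : (n:ℝ) ≠ 0) (hn1 : (n:ℝ) ≠ 1) (hn1' : (n:ℝ) ≠ -1) :
    Real.sin (Real.pi/n) ≠ 0 := by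
  intro h
  obtain ⟨k, hk⟩ := Real.sin_eq_zero_iff.mp h
  have hkn : (k:ℝ) * (n:ℝ) = 1 := by
    have hπ : Real.pi ≠ 0 := Real.pi_ne_zero
    field_simp at hk
    have h' : ((k:ℝ) * n - 1) * Real.pi = 0 := by linear_combination Real.pi * hk
    rcases mul_eq_zero.mp h' with h'' | h''
    · linarith
    · exact absurd h'' hπ
  have hkz : (k * n : ℤ) = 1 := by exact_mod_cast hkn
  rcases Int.mul_eq_one_iff_eq_one_or_neg_one.mp hkz with ⟨_, h⟩ | ⟨_, h⟩
  · exact hn1 (by exact_mod_cast h)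
  · exact hn1' (by exact_mod_cast h)

private lemma lemA (ω : ℝ) (h0 : ω ≠ 0) (h2 : ω ≠ 2) (h2' : ω ≠ -2) :
    ∃ v w : ℝ, Real.sin (2*v) ≠ 0 ∧ Real.sin (2*w) ≠ 0 ∧
      Real.sin (2*v) * Real.sin (ω*w) ≠ Real.sin (2*w) * Real.sin (ω*v) := by
  by_contra hcon
  push_neg at hcon
  have hpi := Real.pi_pos
  have hv4 : Real.sin (2*(Real.pi/4)) ≠ 0 := by
    rw [show 2*(Real.pi/4) = Real.pi/2 by ring, Real.sin_pi_div_two]; norm_num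
  set μ : ℝ := Real.sin (ω*(Real.pi/4)) with hμ
  have key : ∀ w, Real.sin (ω*w) - μ * Real.sin (2*w) = 0 := by
    apply ext_zero (by continuity)
    intro w hw
    have := hcon (Real.pi/4) w hv4 hw
    rw [show 2*(Real.pi/4) = Real.pi/2 by ring, Real.sin_pi_div_two, one_mul] at this
    rw [this]; ring
  have h1 : Real.sin (ω*(Real.pi/2)) = 0 := by
    have := key (Real.pi/2)
    rw [show 2*(Real.pi/2) = Real.pi by ring, Real.sin_pi] at this
    linarith [this]
  obtain ⟨n, hn⟩ := Real.sin_eq_zero_iff.mp h1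
  have hωn : ω = 2*n := by
    have : (n:ℝ) * Real.pi = ω * (Real.pi/2) := hn
    nlinarith [this]
  have hn0 : (n:ℝ) ≠ 0 := by intro h; apply h0; rw [hωn, h]; ring
  have hn1 : (n:ℝ) ≠ 1 := by intro h; apply h2; rw [hωn, h]; ring
  have hn1' : (n:ℝ) ≠ -1 := by intro h; apply h2'; rw [hωn, h]; ring
  have hsn := int_ne_pm1 hn0 hn1 hn1'
  have hμ0 : μ = 0 := by
    have := key (Real.pi/(2*n))
    rw [hωn, show 2*(n:ℝ)*(Real.pi/(2*n)) = Real.pi by field_simp,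
        show 2*(Real.pi/(2*(n:ℝ))) = Real.pi/n by field_simp, Real.sin_pi] at this
    rcases mul_eq_zero.mp (by linarith [this] : μ * Real.sin (Real.pi/(n:ℝ)) = 0) with h | h
    · exact h
    · exact absurd h hsn
  have := key (Real.pi/(4*n))
  rw [hωn, hμ0, show 2*(n:ℝ)*(Real.pi/(4*n)) = Real.pi/2 by field_simp; ring,
      Real.sin_pi_div_two] at this
  norm_num at this

private lemma lemB (ω : ℝ) (h0 : ω ≠ 0) (h2 : ω ≠ 2) (h2'' : ω ≠ -2) :
    ∃ v w : ℝ, Real.sin (2*v) ≠ 0 ∧ Real.sin (2*w) ≠ 0 ∧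
      Real.cos (2*v) * Real.cos (ω*w) ≠ Real.cos (2*w) * Real.cos (ω*v) := by
  by_contra hcon
  push_neg at hcon
  have hpi := Real.pi_pos
  have hv6 : Real.sin (2*(Real.pi/6)) ≠ 0 := by
    rw [show 2*(Real.pi/6) = Real.pi/3 by ring, Real.sin_pi_div_three]
    positivity
  have hc6 : Real.cos (2*(Real.pi/6)) = 1/2 := by
    rw [show 2*(Real.pi/6) = Real.pi/3 by ring, Real.cos_pi_div_three]
  set lam : ℝ := 2 * Real.cos (ω*(Real.pi/6)) with hlam
  have key : ∀ w, Real.cos (ω*w) - lam * Real.cos (2*w) = 0 := by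
    apply ext_zero (by continuity)
    intro w hw
    have := hcon (Real.pi/6) w hv6 hw
    rw [hc6] at this
    rw [hlam]; linarith [this]
  have hl1 : lam = 1 := by
    have := key 0
    simp at this; linarith [this]
  rw [hl1] at key
  have h1 : Real.cos (ω*Real.pi) = 1 := by
    have := key Real.pi
    rw [show 2*Real.pi = 2*Real.pi by ring, Real.cos_two_pi] at this
    linarith [this]
  obtain ⟨n, hn⟩ := (Real.cos_eq_one_iff _).mp h1
  have hωn : ω = 2*n := by nlinarith [hn]
  have hn0 : (n:ℝ) ≠ 0 := by intro h; apply h0; rw [hωn, h]; ring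
  have hn1 : (n:ℝ) ≠ 1 := by intro h; apply h2; rw [hωn, h]; ring
  have hn1' : (n:ℝ) ≠ -1 := by intro h; apply h2''; rw [hωn, h]; ring
  have hd : (n:ℝ) ≤ -2 ∨ 2 ≤ (n:ℝ) := by
    have hz : n ≠ 0 := fun h => hn0 (by rw [h]; simp)
    have ho : n ≠ 1 := fun h => hn1 (by rw [h]; simp)
    have ho' : n ≠ -1 := fun h => hn1' (by rw [h]; simp)
    have : n ≤ -2 ∨ 2 ≤ n := by omega
    rcases this with h | h
    · left; exact_mod_cast h
    · right; exact_mod_cast h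
  have hkey := key (Real.pi/(2*n))
  rw [hωn, show 2*(n:ℝ)*(Real.pi/(2*n)) = Real.pi by field_simp, Real.cos_pi,
      show 2*(Real.pi/(2*(n:ℝ))) = Real.pi/n by field_simp] at hkey
  have hcos : 0 ≤ Real.cos (Real.pi/n) := by
    apply Real.cos_nonneg_of_mem_Icc
    rcases hd with h | h
    · have hlt : Real.pi/(n:ℝ) < 0 := div_neg_of_pos_of_neg hpi (by linarith)
      have hub : Real.pi/(-(n:ℝ)) ≤ Real.pi/2 := by
        rw [div_le_div_iff₀ (by linarith) (by norm_num)]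
        nlinarith
      have heq : Real.pi/(n:ℝ) = -(Real.pi/(-(n:ℝ))) := by
        rw [div_neg]; ring
      constructor
      · rw [heq]; linarith
      · linarith
    · have hgt : 0 < Real.pi/(n:ℝ) := div_pos hpi (by linarith)
      have hub : Real.pi/(n:ℝ) ≤ Real.pi/2 := by
        rw [div_le_div_iff₀ (by linarith) (by norm_num)]
        nlinarith
      constructor
      · linarith
      · linarith
  linarith [hkey]

/- ### Matrix auxiliary definitions and bracket computations -/

private def Hm : Matrix (Fin 2) (Fin 2) ℂ := !![1,0;0,-1]
private def iHm : Matrix (Fin 2) (Fin 2) ℂ := !![Complex.I,0;0,-Complex.I]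
private def Xm (c1 c2 : ℂ) : Matrix (Fin 2) (Fin 2) ℂ := !![0,c1;c2,0]
private def X2m (c1 c2 : ℂ) : Matrix (Fin 2) (Fin 2) ℂ := !![0,c1;-c2,0]
private def Ym (c1 c2 : ℂ) : Matrix (Fin 2) (Fin 2) ℂ := !![0,Complex.I*c1;-(Complex.I*c2),0]
private def Y2m (c1 c2 : ℂ) : Matrix (Fin 2) (Fin 2) ℂ := !![0,Complex.I*c1;Complex.I*c2,0]
private def Em (c1 : ℂ) : Matrix (Fin 2) (Fin 2) ℂ := !![0,c1;0,0]
private def Fm (c2 : ℂ) : Matrix (Fin 2) (Fin 2) ℂ := !![0,0;c2,0]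
private def iEm (c1 : ℂ) : Matrix (Fin 2) (Fin 2) ℂ := !![0,Complex.I*c1;0,0]
private def iFm (c2 : ℂ) : Matrix (Fin 2) (Fin 2) ℂ := !![0,0;Complex.I*c2,0]

private lemma brQQ (c1 c2 : ℂ) (p q r s : ℝ) :
    ⁅p • iHm + q • Ym c1 c2, r • iHm + s • Ym c1 c2⁆
      = (-2*(p*s - q*r)) • Xm c1 c2 := by
  ext i j
  fin_cases i <;> fin_cases j <;>
    simp [Ring.lie_def, Hm, iHm, Xm, Ym, Matrix.mul_apply, Fin.sum_univ_two,
      Complex.real_smul, Complex.I_sq] <;> ring_nf <;>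
    simp [Complex.I_sq] <;> ring

private lemma brPP (c1 c2 : ℂ) (p q r s : ℝ) :
    ⁅p • Hm + q • Xm c1 c2, r • Hm + s • Xm c1 c2⁆
      = (2*(p*s - q*r)) • X2m c1 c2 := by
  ext i j
  fin_cases i <;> fin_cases j <;>
    simp [Ring.lie_def, Hm, Xm, X2m, Matrix.mul_apply, Fin.sum_univ_two,
      Complex.real_smul] <;> ring

private lemma brHQ (c1 c2 : ℂ) (p q : ℝ) :
    ⁅Hm, p • iHm + q • Ym c1 c2⁆ = (2*q) • Y2m c1 c2 := by
  ext i j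
  fin_cases i <;> fin_cases j <;>
    simp [Ring.lie_def, Hm, iHm, Ym, Y2m, Matrix.mul_apply, Fin.sum_univ_two,
      Complex.real_smul] <;> ring

private lemma brHY2 (c1 c2 : ℂ) : ⁅Hm, Y2m c1 c2⁆ = (2:ℝ) • Ym c1 c2 := by
  ext i j
  fin_cases i <;> fin_cases j <;>
    simp [Ring.lie_def, Hm, Ym, Y2m, Matrix.mul_apply, Fin.sum_univ_two,
      Complex.real_smul] <;> ring

private lemma brEF (c1 c2 : ℂ) : ⁅Em c1, Fm c2⁆ = !![c1*c2,0;0,-(c1*c2)] := by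
  ext i j
  fin_cases i <;> fin_cases j <;>
    simp [Ring.lie_def, Em, Fm, Matrix.mul_apply, Fin.sum_univ_two] <;> ring

private lemma halfXX (c1 c2 : ℂ) : (1/2:ℝ) • (Xm c1 c2 + X2m c1 c2) = Em c1 := by
  ext i j
  fin_cases i <;> fin_cases j <;>
    simp [Xm, X2m, Em, Complex.real_smul] <;> ring

private lemma halfXX' (c1 c2 : ℂ) : (1/2:ℝ) • (Xm c1 c2 - X2m c1 c2) = Fm c2 := by
  ext i j
  fin_cases i <;> fin_cases j <;>
    simp [Xm, X2m, Fm, Complex.real_smul] <;> ring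

private lemma halfYY (c1 c2 : ℂ) : (1/2:ℝ) • (Ym c1 c2 + Y2m c1 c2) = iEm c1 := by
  ext i j
  fin_cases i <;> fin_cases j <;>
    simp [Ym, Y2m, iEm, Complex.real_smul] <;> ring

private lemma halfYY' (c1 c2 : ℂ) : (1/2:ℝ) • (Y2m c1 c2 - Ym c1 c2) = iFm c2 := by
  ext i j
  fin_cases i <;> fin_cases j <;>
    simp [Ym, Y2m, iFm, Complex.real_smul] <;> ring

private lemma smul_cancel {S : LieSubalgebra ℝ (Matrix (Fin 2) (Fin 2) ℂ)} {t : ℝ}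
    (ht : t ≠ 0) {A : Matrix (Fin 2) (Fin 2) ℂ} (h : t • A ∈ S) : A ∈ S := by
  have := S.smul_mem t⁻¹ h
  rwa [smul_smul, inv_mul_cancel₀ ht, one_smul] at this

private def sl2R : LieSubalgebra ℝ (Matrix (Fin 2) (Fin 2) ℂ) where
  carrier := {A | A.trace = 0}
  add_mem' := by
    intro a b ha hb
    simp only [Set.mem_setOf_eq] at *
    rw [Matrix.trace_add, ha, hb, add_zero]
  zero_mem' := by simp
  smul_mem' := by
    intro c x hx
    simp only [Set.mem_setOf_eq] at *
    rw [Matrix.trace_smul, hx, smul_zero]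
  lie_mem' := by
    intro x y hx hy
    simp only [Set.mem_setOf_eq] at *
    rw [Ring.lie_def, Matrix.trace_sub, Matrix.trace_mul_comm, sub_self]

private lemma cexp (t : ℝ) :
    Complex.exp (Complex.I * t) = (Real.cos t : ℂ) + (Real.sin t : ℂ) * Complex.I := by
  rw [mul_comm, Complex.exp_mul_I]
  rw [← Complex.ofReal_cos, ← Complex.ofReal_sin]

/-- The tangent matrices `g(v)` of the postselection gadgets generate, as a real
Lie algebra, all of `sl(2,ℂ)` when `a' ∉ {1, −1, −3}`. -/
theorem stmt_16 (α β : ℂ) (hα : α ≠ 0) (hβ : β ≠ 0)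
    (a' : ℝ) (ha1 : a' ≠ 1) (ha2 : a' ≠ -1) (ha3 : a' ≠ -3)
    (g : ℝ → Matrix (Fin 2) (Fin 2) ℂ)
    (hg : ∀ v : ℝ, g v =
      !![((a' : ℂ) + 1) * Complex.exp (-(2 * Complex.I * (v : ℂ))),
          (α / β) * (1 - (a' : ℂ)) * Complex.exp (Complex.I * (1 + (a' : ℂ)) * (v : ℂ));
          (β / α) * (3 + (a' : ℂ)) * Complex.exp (-(Complex.I * (1 + (a' : ℂ)) * (v : ℂ))),
          -(((a' : ℂ) + 1) * Complex.exp (-(2 * Complex.I * (v : ℂ))))]) :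
    (LieSubalgebra.lieSpan ℝ (Matrix (Fin 2) (Fin 2) ℂ)
        {A | ∃ v : ℝ, Real.sin (2 * v) ≠ 0 ∧ A = g v} :
        Set (Matrix (Fin 2) (Fin 2) ℂ)) =
      {A : Matrix (Fin 2) (Fin 2) ℂ | A.trace = 0} := by
  set c1 : ℂ := (α/β) * (1 - (a':ℂ)) with hc1def
  set c2 : ℂ := (β/α) * (3 + (a':ℂ)) with hc2def
  set S := LieSubalgebra.lieSpan ℝ (Matrix (Fin 2) (Fin 2) ℂ)
      {A | ∃ v : ℝ, Real.sin (2 * v) ≠ 0 ∧ A = g v} with hSdef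
  -- basic nonvanishing facts
  have h1a : (1 - a' : ℝ) ≠ 0 := sub_ne_zero.mpr (Ne.symm ha1)
  have h3a : (3 + a' : ℝ) ≠ 0 := by intro h; apply ha3; linarith
  have hap1 : (a' + 1 : ℝ) ≠ 0 := by intro h; apply ha2; linarith
  have hc1 : c1 ≠ 0 := by
    rw [hc1def]
    apply mul_ne_zero (div_ne_zero hα hβ)
    intro h; apply h1a
    have : ((1 - a' : ℝ) : ℂ) = 0 := by push_cast; rw [← h]
    exact_mod_cast this
  have hc2 : c2 ≠ 0 := by
    rw [hc2def]
    apply mul_ne_zero (div_ne_zero hβ hα)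
    intro h; apply h3a
    have : ((3 + a' : ℝ) : ℂ) = 0 := by push_cast; rw [← h]
    exact_mod_cast this
  have hω0 : (1 + a' : ℝ) ≠ 0 := by intro h; apply ha2; linarith
  have hω2 : (1 + a' : ℝ) ≠ 2 := by intro h; apply ha1; linarith
  have hω2' : (1 + a' : ℝ) ≠ -2 := by intro h; apply ha3; linarith
  -- trig expansion of g
  have gexp : ∀ v : ℝ, g v = ((a'+1) * Real.cos (2*v)) • Hm
      + (Real.sin (2*v) * (-(a'+1))) • iHm
      + (Real.cos ((1+a')*v)) • Xm c1 c2
      + (Real.sin ((1+a')*v)) • Ym c1 c2 := by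
    intro v
    rw [hg v]
    have e1 : Complex.exp (-(2 * Complex.I * (v:ℂ)))
        = Complex.exp (Complex.I * ((-(2*v):ℝ):ℂ)) := by congr 1; push_cast; ring
    have e2 : Complex.exp (Complex.I * (1 + (a':ℂ)) * (v:ℂ))
        = Complex.exp (Complex.I * (((1+a')*v : ℝ):ℂ)) := by congr 1; push_cast; ring
    have e3 : Complex.exp (-(Complex.I * (1 + (a':ℂ)) * (v:ℂ)))
        = Complex.exp (Complex.I * ((-((1+a')*v) : ℝ):ℂ)) := by congr 1; push_cast; ring
    rw [e1, e2, e3, cexp, cexp, cexp]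
    ext i j
    fin_cases i <;> fin_cases j <;>
      simp [Hm, iHm, Xm, Ym, hc1def, hc2def, Complex.real_smul,
        Real.cos_neg, Real.sin_neg] <;> ring
  -- membership of the generators
  have hmem : ∀ v : ℝ, Real.sin (2*v) ≠ 0 → g v ∈ S :=
    fun v hv => LieSubalgebra.subset_lieSpan ⟨v, hv, rfl⟩
  have hQmem : ∀ v : ℝ, Real.sin (2*v) ≠ 0 →
      (Real.sin (2*v) * (-(a'+1))) • iHm + (Real.sin ((1+a')*v)) • Ym c1 c2 ∈ S := by
    intro v hv
    have h1 := hmem v hv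
    have h2 := hmem (-v) (by
      rw [show 2*(-v) = -(2*v) by ring, Real.sin_neg]; simpa using hv)
    have key : (Real.sin (2*v) * (-(a'+1))) • iHm + (Real.sin ((1+a')*v)) • Ym c1 c2
        = (1/2:ℝ) • (g v - g (-v)) := by
      rw [gexp v, gexp (-v), show 2*(-v) = -(2*v) by ring,
          show (1+a')*(-v) = -((1+a')*v) by ring]
      simp only [Real.cos_neg, Real.sin_neg]
      module
    rw [key]; exact S.smul_mem _ (S.sub_mem h1 h2)
  have hPmem : ∀ v : ℝ, Real.sin (2*v) ≠ 0 →
      ((a'+1) * Real.cos (2*v)) • Hm + (Real.cos ((1+a')*v)) • Xm c1 c2 ∈ S := by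
    intro v hv
    have h1 := hmem v hv
    have h2 := hmem (-v) (by
      rw [show 2*(-v) = -(2*v) by ring, Real.sin_neg]; simpa using hv)
    have key : ((a'+1) * Real.cos (2*v)) • Hm + (Real.cos ((1+a')*v)) • Xm c1 c2
        = (1/2:ℝ) • (g v + g (-v)) := by
      rw [gexp v, gexp (-v), show 2*(-v) = -(2*v) by ring,
          show (1+a')*(-v) = -((1+a')*v) by ring]
      simp only [Real.cos_neg, Real.sin_neg]
      module
    rw [key]; exact S.smul_mem _ (S.add_mem h1 h2)
  -- X ∈ S
  obtain ⟨v, w, hv, hw, hA⟩ := lemA (1+a') hω0 hω2 hω2'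
  have hXmem : Xm c1 c2 ∈ S := by
    have hbr := S.lie_mem (hQmem v hv) (hQmem w hw)
    rw [brQQ] at hbr
    rw [show (-2*((Real.sin (2*v) * (-(a'+1))) * Real.sin ((1+a')*w)
        - Real.sin ((1+a')*v) * (Real.sin (2*w) * (-(a'+1)))))
      = 2*(a'+1)*(Real.sin (2*v) * Real.sin ((1+a')*w)
        - Real.sin (2*w) * Real.sin ((1+a')*v)) by ring] at hbr
    exact smul_cancel
      (mul_ne_zero (mul_ne_zero two_ne_zero hap1) (sub_ne_zero.mpr hA)) hbr
  -- X2 ∈ S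
  obtain ⟨v', w', hv', hw', hB⟩ := lemB (1+a') hω0 hω2 hω2'
  have hX2mem : X2m c1 c2 ∈ S := by
    have hbr := S.lie_mem (hPmem v' hv') (hPmem w' hw')
    rw [brPP] at hbr
    rw [show (2*(((a'+1) * Real.cos (2*v')) * Real.cos ((1+a')*w')
        - Real.cos ((1+a')*v') * ((a'+1) * Real.cos (2*w'))))
      = 2*(a'+1)*(Real.cos (2*v') * Real.cos ((1+a')*w')
        - Real.cos (2*w') * Real.cos ((1+a')*v')) by ring] at hbr
    exact smul_cancel
      (mul_ne_zero (mul_ne_zero two_ne_zero hap1) (sub_ne_zero.mpr hB)) hbr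
  -- E, F, H ∈ S
  have hEmem : Em c1 ∈ S := by
    rw [← halfXX c1 c2]; exact S.smul_mem _ (S.add_mem hXmem hX2mem)
  have hFmem : Fm c2 ∈ S := by
    rw [← halfXX' c1 c2]; exact S.smul_mem _ (S.sub_mem hXmem hX2mem)
  have hHmem : Hm ∈ S := by
    have hbr := S.lie_mem hEmem hFmem
    rw [brEF] at hbr
    have hcc : c1*c2 = (((1-a')*(3+a') : ℝ) : ℂ) := by
      rw [hc1def, hc2def]; push_cast; field_simp
    have hEF : !![c1*c2, (0:ℂ); 0, -(c1*c2)] = ((1-a')*(3+a') : ℝ) • Hm := by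
      ext i j
      fin_cases i <;> fin_cases j <;>
        simp [Hm, Complex.real_smul, hcc] <;> ring
    rw [hEF] at hbr
    exact smul_cancel (mul_ne_zero h1a h3a) hbr
  -- pick v₀ with sin(2v₀) ≠ 0 and sin((1+a')v₀) ≠ 0
  obtain ⟨v₀, hv₀, hsω⟩ : ∃ u : ℝ, Real.sin (2*u) ≠ 0 ∧ Real.sin ((1+a')*u) ≠ 0 := by
    by_cases hsv : Real.sin ((1+a')*v) = 0
    · refine ⟨w, hw, ?_⟩
      intro h; apply hA; rw [h, hsv]; ring
    · exact ⟨v, hv, hsv⟩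
  -- Y2, Y, iE, iF, iH ∈ S
  have hY2mem : Y2m c1 c2 ∈ S := by
    have hbr := S.lie_mem hHmem (hQmem v₀ hv₀)
    rw [brHQ] at hbr
    exact smul_cancel (mul_ne_zero two_ne_zero hsω) hbr
  have hYmem : Ym c1 c2 ∈ S := by
    have hbr := S.lie_mem hHmem hY2mem
    rw [brHY2] at hbr
    exact smul_cancel two_ne_zero hbr
  have hiEmem : iEm c1 ∈ S := by
    rw [← halfYY c1 c2]; exact S.smul_mem _ (S.add_mem hYmem hY2mem)
  have hiFmem : iFm c2 ∈ S := by
    rw [← halfYY' c1 c2]; exact S.smul_mem _ (S.sub_mem hY2mem hYmem)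
  have hiHmem : iHm ∈ S := by
    have hsub : (Real.sin (2*v₀) * (-(a'+1))) • iHm ∈ S := by
      have h := S.sub_mem (hQmem v₀ hv₀) (S.smul_mem (Real.sin ((1+a')*v₀)) hYmem)
      simpa using h
    exact smul_cancel (mul_ne_zero hv₀ (neg_ne_zero.mpr hap1)) hsub
  -- antisymmetry of inclusions
  apply Set.Subset.antisymm
  · intro A hAmem
    have hsub : {A : Matrix (Fin 2) (Fin 2) ℂ | ∃ v : ℝ, Real.sin (2 * v) ≠ 0 ∧ A = g v}
        ⊆ (sl2R : Set (Matrix (Fin 2) (Fin 2) ℂ)) := by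
      rintro B ⟨u, hu, rfl⟩
      show (g u).trace = 0
      rw [hg u, Matrix.trace_fin_two]
      simp
    exact (LieSubalgebra.lieSpan_le.mpr hsub) hAmem
  · intro A hAtr
    simp only [Set.mem_setOf_eq] at hAtr
    have h11 : A 1 1 = -(A 0 0) := by
      have h := Matrix.trace_fin_two A
      rw [hAtr] at h
      linear_combination -h
    have hrep : A = (A 0 0).re • Hm + (A 0 0).im • iHm
        + ((A 0 1)/c1).re • Em c1 + ((A 0 1)/c1).im • iEm c1
        + ((A 1 0)/c2).re • Fm c2 + ((A 1 0)/c2).im • iFm c2 := by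
      ext i j
      fin_cases i <;> fin_cases j
      · simp [Hm, iHm, Em, iEm, Fm, iFm, Complex.real_smul]
      · simp [Hm, iHm, Em, iEm, Fm, iFm, Complex.real_smul]
        linear_combination -(c1 * Complex.re_add_im (A 0 1 / c1))
          - div_mul_cancel₀ (A 0 1) hc1
      · simp [Hm, iHm, Em, iEm, Fm, iFm, Complex.real_smul]
        linear_combination -(c2 * Complex.re_add_im (A 1 0 / c2))
          - div_mul_cancel₀ (A 1 0) hc2
      · simp [Hm, iHm, Em, iEm, Fm, iFm, Complex.real_smul, h11]
        linear_combination Complex.re_add_im (A 0 0)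
    rw [hrep]
    exact S.add_mem (S.add_mem (S.add_mem (S.add_mem (S.add_mem
      (S.smul_mem _ hHmem) (S.smul_mem _ hiHmem))
      (S.smul_mem _ hEmem)) (S.smul_mem _ hiEmem))
      (S.smul_mem _ hFmem)) (S.smul_mem _ hiFmem)
end

section
/- Let α, β be nonzero complex numbers and let a' ∈ ℝ with a' ∉ {0, −1}. For θ ∈ ℝ define the 2×2 complex matrices g(θ) = !![−a'·Complex.I, −(α/β)·a'·exp(i·θ); (β/α)·(2+a')·exp(−i·θ), a'·Complex.I] and h(θ) = !![−(a'+1)·Complex.I, (α/β)·(1−a')·exp(i·θ); (β/α)·(1+a')·exp(−i·θ), (a'+1)·Complex.I]. Then the smallest Lie subalgebra over ℝ of the Lie algebra of 2×2 complex matrices (with the commutator bracket) containing the set {g(θ) : θ ∈ ℝ} ∪ {h(θ) : θ ∈ ℝ} is exactly the set of traceless 2×2 complex matrices sl(2,ℂ). -/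
open Matrix

attribute [local instance] LieRing.ofAssociativeRing

def sl2C : LieSubalgebra ℝ (Matrix (Fin 2) (Fin 2) ℂ) where
  carrier := {A | A.trace = 0}
  add_mem' := by
    intro a b ha hb
    simp only [Set.mem_setOf_eq, Matrix.trace_add] at *
    rw [ha, hb, add_zero]
  zero_mem' := by simp
  smul_mem' := by
    intro c x hx
    simp only [Set.mem_setOf_eq, Matrix.trace_smul] at *
    rw [hx, smul_zero]
  lie_mem' := by
    intro x y _ _
    simp only [Set.mem_setOf_eq, Ring.lie_def, Matrix.trace_sub,
      Matrix.trace_mul_comm x y, sub_self]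

lemma expI0 : Complex.exp (Complex.I * ((0:ℝ):ℂ)) = 1 := by simp
lemma expI0' : Complex.exp (-(Complex.I * ((0:ℝ):ℂ))) = 1 := by simp
lemma expIpi : Complex.exp (Complex.I * ((Real.pi:ℝ):ℂ)) = -1 := by
  rw [mul_comm]; exact Complex.exp_pi_mul_I
lemma expIpi' : Complex.exp (-(Complex.I * ((Real.pi:ℝ):ℂ))) = -1 := by
  rw [Complex.exp_neg, expIpi]; norm_num
lemma expIpi2 : Complex.exp (Complex.I * ((Real.pi/2:ℝ):ℂ)) = Complex.I := by
  rw [mul_comm, Complex.exp_mul_I]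
  norm_cast
  rw [Real.cos_pi_div_two, Real.sin_pi_div_two]
  simp
lemma expIpi2' : Complex.exp (-(Complex.I * ((Real.pi/2:ℝ):ℂ))) = -Complex.I := by
  rw [Complex.exp_neg, expIpi2, Complex.inv_I]
lemma expImpi2 : Complex.exp (Complex.I * ((-(Real.pi/2):ℝ):ℂ)) = -Complex.I := by
  rw [mul_comm, Complex.exp_mul_I]
  norm_cast
  simp [Real.cos_pi_div_two, Real.sin_pi_div_two]
lemma expImpi2' : Complex.exp (-(Complex.I * ((-(Real.pi/2):ℝ):ℂ))) = Complex.I := by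
  rw [Complex.exp_neg, expImpi2, inv_neg, Complex.inv_I, neg_neg]

set_option maxHeartbeats 1000000 in
/-- In the two-parameter case (`H ≠ THT`, `d' = −1 − a'`), the tangent matrices
`g(θ)` and `h(θ)` generate, as a real Lie algebra, all of `sl(2,ℂ)`
when `a' ∉ {0, −1}`. -/
theorem stmt_17 (α β : ℂ) (hα : α ≠ 0) (hβ : β ≠ 0)
    (a' : ℝ) (ha0 : a' ≠ 0) (ha1 : a' ≠ -1)
    (g h : ℝ → Matrix (Fin 2) (Fin 2) ℂ)
    (hg : ∀ θ : ℝ, g θ =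
      !![-((a' : ℂ) * Complex.I),
          -((α / β) * (a' : ℂ) * Complex.exp (Complex.I * (θ : ℂ)));
          (β / α) * (2 + (a' : ℂ)) * Complex.exp (-(Complex.I * (θ : ℂ))),
          (a' : ℂ) * Complex.I])
    (hh : ∀ θ : ℝ, h θ =
      !![-(((a' : ℂ) + 1) * Complex.I),
          (α / β) * (1 - (a' : ℂ)) * Complex.exp (Complex.I * (θ : ℂ));
          (β / α) * (1 + (a' : ℂ)) * Complex.exp (-(Complex.I * (θ : ℂ))),
          ((a' : ℂ) + 1) * Complex.I]) :
    (LieSubalgebra.lieSpan ℝ (Matrix (Fin 2) (Fin 2) ℂ)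
        ({A | ∃ θ : ℝ, A = g θ} ∪ {A | ∃ θ : ℝ, A = h θ}) :
        Set (Matrix (Fin 2) (Fin 2) ℂ)) =
      {A : Matrix (Fin 2) (Fin 2) ℂ | A.trace = 0} := by
  set S := LieSubalgebra.lieSpan ℝ (Matrix (Fin 2) (Fin 2) ℂ)
      ({A | ∃ θ : ℝ, A = g θ} ∪ {A | ∃ θ : ℝ, A = h θ}) with hS
  have ha0c : (a' : ℂ) ≠ 0 := by exact_mod_cast ha0
  have hgS : ∀ θ : ℝ, g θ ∈ S :=
    fun θ => LieSubalgebra.subset_lieSpan (Set.mem_union_left _ ⟨θ, rfl⟩)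
  have hhS : ∀ θ : ℝ, h θ ∈ S :=
    fun θ => LieSubalgebra.subset_lieSpan (Set.mem_union_right _ ⟨θ, rfl⟩)
  -- the six generators
  have hiH : (!![Complex.I, 0; 0, -Complex.I] : Matrix (Fin 2) (Fin 2) ℂ) ∈ S := by
    have e : (!![Complex.I, 0; 0, -Complex.I] : Matrix (Fin 2) (Fin 2) ℂ)
        = (-(1/(2*a')) : ℝ) • (g 0 + g Real.pi) := by
      ext i j
      fin_cases i <;> fin_cases j <;>
        simp [hg, expI0, expI0', expIpi, expIpi', Complex.real_smul]
      all_goals field_simp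
      all_goals ring
    rw [e]; exact S.smul_mem _ (S.add_mem (hgS 0) (hgS Real.pi))
  have hE : (!![0, α/β; 0, 0] : Matrix (Fin 2) (Fin 2) ℂ) ∈ S := by
    have e : (!![0, α/β; 0, 0] : Matrix (Fin 2) (Fin 2) ℂ)
        = (-(1/4) : ℝ) • ((1+a') • (g 0 - g Real.pi) - (2+a') • (h 0 - h Real.pi)) := by
      ext i j
      fin_cases i <;> fin_cases j <;>
        simp [hg, hh, expI0, expI0', expIpi, expIpi', Complex.real_smul] <;> ring
    rw [e]
    exact S.smul_mem _ (S.sub_mem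
      (S.smul_mem _ (S.sub_mem (hgS 0) (hgS Real.pi)))
      (S.smul_mem _ (S.sub_mem (hhS 0) (hhS Real.pi))))
  have hF : (!![0, 0; β/α, 0] : Matrix (Fin 2) (Fin 2) ℂ) ∈ S := by
    have e : (!![0, 0; β/α, 0] : Matrix (Fin 2) (Fin 2) ℂ)
        = (1/4 : ℝ) • ((1-a') • (g 0 - g Real.pi) + a' • (h 0 - h Real.pi)) := by
      ext i j
      fin_cases i <;> fin_cases j <;>
        simp [hg, hh, expI0, expI0', expIpi, expIpi', Complex.real_smul] <;> ring
    rw [e]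
    exact S.smul_mem _ (S.add_mem
      (S.smul_mem _ (S.sub_mem (hgS 0) (hgS Real.pi)))
      (S.smul_mem _ (S.sub_mem (hhS 0) (hhS Real.pi))))
  have hiE : (!![0, (α/β) * Complex.I; 0, 0] : Matrix (Fin 2) (Fin 2) ℂ) ∈ S := by
    have e : (!![0, (α/β) * Complex.I; 0, 0] : Matrix (Fin 2) (Fin 2) ℂ)
        = (1/4 : ℝ) • ((-(1+a')) • (g (Real.pi/2) - g (-(Real.pi/2)))
            + (2+a') • (h (Real.pi/2) - h (-(Real.pi/2)))) := by
      ext i j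
      fin_cases i <;> fin_cases j <;>
        · simp only [hg, hh]
          rw [expIpi2, expIpi2', expImpi2, expImpi2']
          simp [Complex.real_smul]
          try ring
    rw [e]
    exact S.smul_mem _ (S.add_mem
      (S.smul_mem _ (S.sub_mem (hgS _) (hgS _)))
      (S.smul_mem _ (S.sub_mem (hhS _) (hhS _))))
  have hiF : (!![0, 0; (β/α) * Complex.I, 0] : Matrix (Fin 2) (Fin 2) ℂ) ∈ S := by
    have e : (!![0, 0; (β/α) * Complex.I, 0] : Matrix (Fin 2) (Fin 2) ℂ)
        = (-(1/4) : ℝ) • ((1-a') • (g (Real.pi/2) - g (-(Real.pi/2)))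
            + a' • (h (Real.pi/2) - h (-(Real.pi/2)))) := by
      ext i j
      fin_cases i <;> fin_cases j <;>
        · simp only [hg, hh]
          rw [expIpi2, expIpi2', expImpi2, expImpi2']
          simp [Complex.real_smul]
          try ring
    rw [e]
    exact S.smul_mem _ (S.add_mem
      (S.smul_mem _ (S.sub_mem (hgS _) (hgS _)))
      (S.smul_mem _ (S.sub_mem (hhS _) (hhS _))))
  have hHm : (!![(1:ℂ), 0; 0, -1] : Matrix (Fin 2) (Fin 2) ℂ) ∈ S := by
    have e : (!![(1:ℂ), 0; 0, -1] : Matrix (Fin 2) (Fin 2) ℂ)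
        = ⁅(!![0, α/β; 0, 0] : Matrix (Fin 2) (Fin 2) ℂ),
           (!![0, 0; β/α, 0] : Matrix (Fin 2) (Fin 2) ℂ)⁆ := by
      rw [Ring.lie_def, Matrix.mul_fin_two, Matrix.mul_fin_two]
      ext i j
      fin_cases i <;> fin_cases j <;> simp <;> field_simp <;> ring
    rw [e]; exact S.lie_mem hE hF
  -- conclude
  ext A
  simp only [SetLike.mem_coe, Set.mem_setOf_eq]
  constructor
  · intro hA
    have hle : S ≤ sl2C := by
      rw [hS]
      apply LieSubalgebra.lieSpan_le.mpr
      rintro X (⟨θ, rfl⟩ | ⟨θ, rfl⟩) <;>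
        · show Matrix.trace _ = 0
          simp only [hg, hh, Matrix.trace_fin_two_of]
          try ring
    exact hle hA
  · intro ht
    rw [Matrix.trace_fin_two] at ht
    obtain ⟨x1, y1, h1⟩ : ∃ x y : ℝ, A 0 0 = (x:ℂ) + y * Complex.I :=
      ⟨(A 0 0).re, (A 0 0).im, (Complex.re_add_im _).symm⟩
    obtain ⟨x2, y2, h2⟩ : ∃ x y : ℝ, A 0 1 = ((x:ℂ) + y * Complex.I) * (α/β) :=
      ⟨(A 0 1 * (β/α)).re, (A 0 1 * (β/α)).im, by
        rw [Complex.re_add_im]; field_simp⟩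
    obtain ⟨x3, y3, h3⟩ : ∃ x y : ℝ, A 1 0 = ((x:ℂ) + y * Complex.I) * (β/α) :=
      ⟨(A 1 0 * (α/β)).re, (A 1 0 * (α/β)).im, by
        rw [Complex.re_add_im]; field_simp⟩
    have hA : A = x1 • (!![(1:ℂ), 0; 0, -1] : Matrix (Fin 2) (Fin 2) ℂ)
        + y1 • (!![Complex.I, 0; 0, -Complex.I] : Matrix (Fin 2) (Fin 2) ℂ)
        + x2 • (!![0, α/β; 0, 0] : Matrix (Fin 2) (Fin 2) ℂ)
        + y2 • (!![0, (α/β) * Complex.I; 0, 0] : Matrix (Fin 2) (Fin 2) ℂ)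
        + x3 • (!![0, 0; β/α, 0] : Matrix (Fin 2) (Fin 2) ℂ)
        + y3 • (!![0, 0; (β/α) * Complex.I, 0] : Matrix (Fin 2) (Fin 2) ℂ) := by
      ext i j
      fin_cases i <;> fin_cases j <;> simp [Complex.real_smul]
      · linear_combination h1
      · linear_combination h2
      · linear_combination h3
      · linear_combination ht - h1
    rw [hA]
    exact S.add_mem (S.add_mem (S.add_mem (S.add_mem (S.add_mem
      (S.smul_mem _ hHm) (S.smul_mem _ hiH)) (S.smul_mem _ hE))
      (S.smul_mem _ hiE)) (S.smul_mem _ hF)) (S.smul_mem _ hiF)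
end

section
/- The image under the matrix exponential of the set of traceless 2×2 complex matrices is dense in SL(2,ℂ): for every M : Matrix (Fin 2) (Fin 2) ℂ with det M = 1 and every ε > 0, there exists A : Matrix (Fin 2) (Fin 2) ℂ with A.trace = 0 such that ‖exp(A) − M‖ < ε. -/
open Matrix

attribute [local instance] Matrix.normedAddCommGroup

lemma aux_diag2 (x y : ℂ) : diagonal ![x, y] = !![x, 0; 0, y] := by
  ext i j; fin_cases i <;> fin_cases j <;> simp [Matrix.diagonal]

/-- Any triangular matrix `!![lam, beta; 0, lam⁻¹]` with `lam ≠ 0`, `lam ^ 2 ≠ 1` is the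
exponential of a traceless matrix. -/
lemma aux_tri_exp (lam beta : ℂ) (h0 : lam ≠ 0) (h1 : lam ^ 2 ≠ 1) :
    ∃ A : Matrix (Fin 2) (Fin 2) ℂ, A.trace = 0 ∧
      NormedSpace.exp A = !![lam, beta; 0, lam⁻¹] := by
  have h2 : 1 - lam ^ 2 ≠ 0 := sub_ne_zero.mpr (Ne.symm h1)
  set e : ℂ := 1 - lam ^ 2 with he
  set P : Matrix (Fin 2) (Fin 2) ℂ := !![1, beta * lam; 0, e] with hP
  set Pinv : Matrix (Fin 2) (Fin 2) ℂ := !![1, -(beta * lam) * e⁻¹; 0, e⁻¹] with hPinv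
  have hPP : P * Pinv = 1 := by
    ext i j
    fin_cases i <;> fin_cases j <;>
      simp [hP, hPinv, Matrix.mul_apply, Fin.sum_univ_two, Matrix.one_apply] <;> field_simp
  have hPP' : Pinv * P = 1 := by
    ext i j
    fin_cases i <;> fin_cases j <;>
      simp [hP, hPinv, Matrix.mul_apply, Fin.sum_univ_two, Matrix.one_apply] <;> field_simp <;> ring
  set U : (Matrix (Fin 2) (Fin 2) ℂ)ˣ := ⟨P, Pinv, hPP, hPP'⟩ with hU
  set μ : ℂ := Complex.log lam with hμ
  refine ⟨(U : Matrix (Fin 2) (Fin 2) ℂ) * diagonal ![μ, -μ] *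
      ((U⁻¹ : _ˣ) : Matrix (Fin 2) (Fin 2) ℂ), ?_, ?_⟩
  · rw [Matrix.trace_mul_cycle]
    have h3 : ((U⁻¹ : _ˣ) : Matrix (Fin 2) (Fin 2) ℂ) * (U : Matrix (Fin 2) (Fin 2) ℂ) = 1 := by
      exact_mod_cast U.inv_mul
    rw [h3, one_mul, Matrix.trace_diagonal]
    simp [Fin.sum_univ_two]
  · rw [Matrix.exp_units_conj, Matrix.exp_diagonal]
    have hdiag : NormedSpace.exp ![μ, -μ] = ![lam, lam⁻¹] := by
      rw [Pi.exp_def]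
      funext i
      fin_cases i <;> simp [← Complex.exp_eq_exp_ℂ, hμ, Complex.exp_neg, Complex.exp_log h0]
    rw [hdiag, aux_diag2]
    show P * !![lam, 0; 0, lam⁻¹] * Pinv = _
    rw [hP, hPinv]
    ext i j
    fin_cases i <;> fin_cases j <;>
      simp [Matrix.mul_apply, Fin.sum_univ_two] <;> field_simp <;> ring

/-- Triangularization of an `SL₂(ℂ)` matrix. -/
lemma aux_tri (M : Matrix (Fin 2) (Fin 2) ℂ) (hM : M.det = 1) :
    ∃ (Q Qi : Matrix (Fin 2) (Fin 2) ℂ) (lam beta : ℂ),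
      Q * Qi = 1 ∧ Qi * Q = 1 ∧ lam ≠ 0 ∧ M = Q * !![lam, beta; 0, lam⁻¹] * Qi := by
  set a := M 0 0 with ha
  set b := M 0 1 with hb
  set c := M 1 0 with hc
  set d := M 1 1 with hd
  have hdet : a * d - b * c = 1 := by rw [ha, hb, hc, hd, ← Matrix.det_fin_two]; exact hM
  have hMeq : M = !![a, b; c, d] := by
    ext i j; fin_cases i <;> fin_cases j <;> simp [ha, hb, hc, hd]
  obtain ⟨s, hs⟩ := IsAlgClosed.exists_pow_nat_eq ((a + d) ^ 2 - 4) (n := 2) (by norm_num)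
  set lam : ℂ := (a + d + s) / 2 with hlam
  have hquad : lam ^ 2 - (a + d) * lam + 1 = 0 := by
    rw [hlam]; linear_combination hs / 4
  have hlam0 : lam ≠ 0 := by
    intro h; rw [h] at hquad; simp at hquad
  have hlaminv : lam⁻¹ = a + d - lam := by
    refine inv_eq_of_mul_eq_one_right ?_
    linear_combination -hquad
  by_cases hb0 : b ≠ 0
  · refine ⟨!![b, 0; lam - a, 1], !![b⁻¹, 0; (a - lam) * b⁻¹, 1], lam, 1, ?_, ?_, hlam0, ?_⟩
    · ext i j; fin_cases i <;> fin_cases j <;>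
        simp [Matrix.mul_apply, Fin.sum_univ_two, Matrix.one_apply] <;> field_simp <;> ring
    · ext i j; fin_cases i <;> fin_cases j <;>
        simp [Matrix.mul_apply, Fin.sum_univ_two, Matrix.one_apply] <;> field_simp <;> ring
    · rw [hMeq, hlaminv]
      ext i j
      fin_cases i <;> fin_cases j <;>
        simp [Matrix.mul_apply, Fin.sum_univ_two] <;> field_simp
      all_goals try ring
      all_goals linear_combination (-hdet - hquad)
  · push_neg at hb0
    by_cases hc0 : c ≠ 0
    · refine ⟨!![lam - d, 1; c, 0], !![0, c⁻¹; 1, (d - lam) * c⁻¹], lam, 1, ?_, ?_, hlam0, ?_⟩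
      · ext i j; fin_cases i <;> fin_cases j <;>
          simp [Matrix.mul_apply, Fin.sum_univ_two, Matrix.one_apply] <;> field_simp <;> ring
      · ext i j; fin_cases i <;> fin_cases j <;>
          simp [Matrix.mul_apply, Fin.sum_univ_two, Matrix.one_apply] <;> field_simp <;> ring
      · rw [hMeq, hlaminv]
        ext i j
        fin_cases i <;> fin_cases j <;>
          simp [Matrix.mul_apply, Fin.sum_univ_two] <;> field_simp
        all_goals try ring
        all_goals linear_combination (-hdet - hquad)
    · push_neg at hc0
      have ha0 : a ≠ 0 := by
        intro h; rw [h, hb0, hc0] at hdet; simp at hdet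
      have hdinv : d = a⁻¹ := by
        rw [hb0, hc0] at hdet; field_simp; linear_combination hdet
      refine ⟨1, 1, a, 0, one_mul 1, one_mul 1, ha0, ?_⟩
      rw [hMeq, hb0, hc0, hdinv, one_mul, mul_one]

lemma aux_avoid (lam : ℂ) (r : ℝ) (hr : 0 < r) :
    ∃ x : ℂ, dist x lam < r ∧ x ≠ 0 ∧ x ^ 2 ≠ 1 := by
  have h1 : (Set.Ioo (0 : ℝ) r).Infinite := Set.Ioo_infinite hr
  have hinj : Set.InjOn (fun t : ℝ => lam + (t : ℂ)) (Set.Ioo 0 r) := by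
    intro x hx y hy h
    simpa using h
  have h2 := (h1.image hinj).diff (Set.toFinite ({0, 1, -1} : Set ℂ))
  obtain ⟨x, hx⟩ := h2.nonempty
  obtain ⟨⟨t, ht, rfl⟩, hnot⟩ := hx
  simp only [Set.mem_insert_iff, Set.mem_singleton_iff, not_or] at hnot
  obtain ⟨h0, hp1, hm1⟩ := hnot
  refine ⟨lam + (t : ℂ), ?_, h0, ?_⟩
  · rw [dist_eq_norm]
    simpa [Complex.norm_real, abs_of_pos ht.1] using ht.2
  · intro h
    rw [sq, mul_self_eq_one_iff] at h
    tauto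

/-- The image of `sl(2,ℂ)` under the matrix exponential is dense in `SL(2,ℂ)`. -/
theorem stmt_19 (M : Matrix (Fin 2) (Fin 2) ℂ) (hM : M.det = 1) :
    ∀ ε : ℝ, 0 < ε →
      ∃ A : Matrix (Fin 2) (Fin 2) ℂ, A.trace = 0 ∧
        ‖NormedSpace.exp A - M‖ < ε := by
  intro ε hε
  obtain ⟨Q, Qi, lam, beta, hQQi, hQiQ, hlam0, hMeq⟩ := aux_tri M hM
  set f : ℂ → Matrix (Fin 2) (Fin 2) ℂ := fun x => Q * !![x, beta; 0, x⁻¹] * Qi with hf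
  have hgcont : Continuous (fun p : ℂ × ℂ => Q * !![p.1, beta; 0, p.2] * Qi) := by
    apply Continuous.matrix_mul
    apply Continuous.matrix_mul continuous_const
    apply continuous_matrix
    intro i j
    fin_cases i <;> fin_cases j <;> simp <;> continuity
    exact continuous_const
  have hfc : ContinuousAt f lam := by
    have h4 : f = (fun p : ℂ × ℂ => Q * !![p.1, beta; 0, p.2] * Qi) ∘ (fun x => (x, x⁻¹)) := rfl
    rw [h4]
    exact hgcont.continuousAt.comp (continuousAt_id.prodMk (continuousAt_inv₀ hlam0))
  replace hfc := Metric.continuousAt_iff.mp hfc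
  obtain ⟨δ, hδ, hball⟩ := hfc ε hε
  obtain ⟨x, hxd, hx0, hx1⟩ := aux_avoid lam δ hδ
  obtain ⟨A0, hA0tr, hA0exp⟩ := aux_tri_exp x beta hx0 hx1
  set U : (Matrix (Fin 2) (Fin 2) ℂ)ˣ := ⟨Q, Qi, hQQi, hQiQ⟩ with hU
  refine ⟨(U : Matrix (Fin 2) (Fin 2) ℂ) * A0 * ((U⁻¹ : _ˣ) : Matrix (Fin 2) (Fin 2) ℂ), ?_, ?_⟩
  · rw [Matrix.trace_mul_cycle]
    have h1 : ((U⁻¹ : _ˣ) : Matrix (Fin 2) (Fin 2) ℂ) * (U : Matrix (Fin 2) (Fin 2) ℂ) = 1 := by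
      exact_mod_cast U.inv_mul
    rw [h1, one_mul, hA0tr]
  · rw [Matrix.exp_units_conj, hA0exp]
    show ‖f x - M‖ < ε
    have h5 := hball hxd
    rw [dist_eq_norm] at h5
    have h6 : f lam = M := hMeq.symm
    rw [h6] at h5
    exact h5
end
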